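/- arXiv:1612.02845 — 3 statements merged into one kernel-verified Lean document; each statement's English description precedes it below -/
import Mathlib

section
/- Let C = C(c,d) be a split Cartan subgroup of GL₂(ℤ_ℓ). Then for all integers a, b ≥ 0: μ_{a,b}(C) equals (ℓ−2)²/(ℓ−1)² if a = 0 and b = 0; equals 2(ℓ−2)/(ℓ−1) · ℓ^{−b} if a = 0 and b > 0; equals ℓ^{−2a} if a > 0 and b = 0; and equals 2·ℓ^{−2a−b} if a > 0 and b > 0. -/
open Matrix Polynomial

/-- Reduction modulo `p^n` on `GL₂(ℤ_p)`. -/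
noncomputable def redGL (p : ℕ) [Fact p.Prime] (n : ℕ) :
    GL (Fin 2) ℤ_[p] →* GL (Fin 2) (ZMod (p ^ n)) :=
  Matrix.GeneralLinearGroup.map (PadicInt.toZModPow n)

/-- `M ≡ I (mod p^k)`. -/
def modI {p : ℕ} [Fact p.Prime] (k : ℕ) (M : GL (Fin 2) ℤ_[p]) : Prop :=
  ∀ i j, ((p : ℤ_[p]) ^ k) ∣ (((M : Matrix (Fin 2) (Fin 2) ℤ_[p]) - 1) i j)

/-- `v_p x = k`, expressed through divisibility (in particular `x ≠ 0`). -/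
def valEq {p : ℕ} [Fact p.Prime] (x : ℤ_[p]) (k : ℕ) : Prop :=
  ((p : ℤ_[p]) ^ k ∣ x) ∧ ¬ ((p : ℤ_[p]) ^ (k + 1) ∣ x)

/-- Condition `E(a,b)`. -/
def CondE {p : ℕ} [Fact p.Prime] (a b : ℕ) (M : GL (Fin 2) ℤ_[p]) : Prop :=
  modI a M ∧ ¬ modI (a + 1) M ∧
    valEq (((M : Matrix (Fin 2) (Fin 2) ℤ_[p]) - 1).det) (2 * a + b)

/-- `𝓜_{a,b}(G)`. -/
def Mset {p : ℕ} [Fact p.Prime] (G : Subgroup (GL (Fin 2) ℤ_[p])) (a b : ℕ) :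
    Set (GL (Fin 2) ℤ_[p]) :=
  {M | M ∈ G ∧ CondE a b M}

/-- `μ_{a,b}(G)`. -/
noncomputable def mu (p : ℕ) [Fact p.Prime] (G : Subgroup (GL (Fin 2) ℤ_[p])) (a b : ℕ) : ℚ :=
  ((redGL p (a + b + 1) '' Mset G a b).ncard : ℚ) /
    ((redGL p (a + b + 1) '' (G : Set (GL (Fin 2) ℤ_[p]))).ncard : ℚ)

/-- `G` is open in `GL₂(ℤ_p)`. -/
def IsOpenSub {p : ℕ} [Fact p.Prime] (G : Subgroup (GL (Fin 2) ℤ_[p])) : Prop :=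
  ∃ m : ℕ, 1 ≤ m ∧ ∀ M : GL (Fin 2) ℤ_[p], modI m M → M ∈ G

/-- The underlying set of the Cartan subgroup `C(c,d)`. -/
def CartanSet {p : ℕ} [Fact p.Prime] (c d : ℤ_[p]) : Set (GL (Fin 2) ℤ_[p]) :=
  {M | ∃ x y : ℤ_[p], (M : Matrix (Fin 2) (Fin 2) ℤ_[p]) = !![x, d * y; y, x + c * y]}

/-- `C` is the Cartan subgroup with parameters `(c,d)`. -/
def IsCartan {p : ℕ} [Fact p.Prime] (c d : ℤ_[p]) (C : Subgroup (GL (Fin 2) ℤ_[p])) : Prop :=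
  (C : Set (GL (Fin 2) ℤ_[p])) = CartanSet c d

/-- `(c,d)` are normalized parameters. -/
def NormalizedParams (p : ℕ) [Fact p.Prime] (c d : ℤ_[p]) : Prop :=
  (c = 0 ∧ d ≠ 0) ∨ (p = 2 ∧ c = 1 ∧ (d = 0 ∨ IsUnit d))

/-- `(c,d)` are parameters of a split Cartan subgroup. -/
def SplitParams (p : ℕ) [Fact p.Prime] (c d : ℤ_[p]) : Prop :=
  (Odd p ∧ c = 0 ∧ ∃ u : ℤ_[p], IsUnit u ∧ d = u ^ 2) ∨ (p = 2 ∧ c = 1 ∧ d = 0)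

/-- `(c,d)` are parameters of a nonsplit Cartan subgroup. -/
def NonsplitParams (p : ℕ) [Fact p.Prime] (c d : ℤ_[p]) : Prop :=
  (Odd p ∧ c = 0 ∧ IsUnit d ∧ ¬ IsSquare d) ∨ (p = 2 ∧ c = 1 ∧ IsUnit d)

set_option maxHeartbeats 3000000


section SPdef
variable (R : Type*) [CommRing R]

structure SP where
  A : Matrix (Fin 2) (Fin 2) R
  B : Matrix (Fin 2) (Fin 2) R
  sum_eq : A + B = 1
  mAA : A * A = A
  mBB : B * B = B
  mAB : A * B = 0
  mBA : B * A = 0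
  trA : A.trace = 1
  trB : B.trace = 1
  det_eq : ∀ s t : R, (s • A + t • B).det = s * t

variable {R}

namespace SP

def Phi (P : SP R) (s t : R) : Matrix (Fin 2) (Fin 2) R := s • P.A + t • P.B

lemma Phi_mul (P : SP R) (s t s' t' : R) :
    P.Phi s t * P.Phi s' t' = P.Phi (s * s') (t * t') := by
  simp only [Phi, Matrix.add_mul, Matrix.mul_add, Matrix.smul_mul, Matrix.mul_smul,
    P.mAA, P.mBB, P.mAB, P.mBA, smul_smul, smul_zero]
  module

lemma Phi_one (P : SP R) : P.Phi 1 1 = 1 := by simp [Phi, P.sum_eq]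

lemma Phi_sub (P : SP R) (s t s' t' : R) :
    P.Phi s t - P.Phi s' t' = P.Phi (s - s') (t - t') := by
  simp only [Phi, sub_smul]; abel

lemma Phi_det (P : SP R) (s t : R) : (P.Phi s t).det = s * t := P.det_eq s t

lemma recA (P : SP R) (s t : R) : (P.Phi s t * P.A).trace = s := by
  have : P.Phi s t * P.A = s • P.A := by
    simp only [Phi, Matrix.add_mul, Matrix.smul_mul, P.mAA, P.mBA, smul_zero, add_zero]
  rw [this, trace_smul, P.trA, smul_eq_mul, mul_one]

lemma recB (P : SP R) (s t : R) : (P.Phi s t * P.B).trace = t := by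
  have : P.Phi s t * P.B = t • P.B := by
    simp only [Phi, Matrix.add_mul, Matrix.smul_mul, P.mAB, P.mBB, smul_zero, zero_add]
  rw [this, trace_smul, P.trB, smul_eq_mul, mul_one]

lemma Phi_inj (P : SP R) {s t s' t' : R} (h : P.Phi s t = P.Phi s' t') :
    s = s' ∧ t = t' := by
  constructor
  · rw [← P.recA s t, h, P.recA]
  · rw [← P.recB s t, h, P.recB]

lemma dvd_trace_mul {x : R} {N : Matrix (Fin 2) (Fin 2) R}
    (h : ∀ i j, x ∣ N i j) (A : Matrix (Fin 2) (Fin 2) R) : x ∣ (N * A).trace := by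
  have : (N * A).trace = N 0 0 * A 0 0 + N 0 1 * A 1 0 + (N 1 0 * A 0 1 + N 1 1 * A 1 1) := by
    simp [Matrix.trace_fin_two, Matrix.mul_apply, Fin.sum_univ_two]
  rw [this]
  exact dvd_add (dvd_add ((h 0 0).mul_right _) ((h 0 1).mul_right _))
    (dvd_add ((h 1 0).mul_right _) ((h 1 1).mul_right _))

lemma dvd_iff (P : SP R) (x s t : R) :
    (∀ i j, x ∣ (P.Phi s t) i j) ↔ (x ∣ s ∧ x ∣ t) := by
  constructor
  · intro h
    constructor
    · rw [← P.recA s t]; exact dvd_trace_mul h _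
    · rw [← P.recB s t]; exact dvd_trace_mul h _
  · rintro ⟨hs, ht⟩ i j
    simp only [Phi, Matrix.add_apply, Matrix.smul_apply, smul_eq_mul]
    exact dvd_add (hs.mul_right _) (ht.mul_right _)

/-- transport along a surjective ring hom -/
def map {S : Type*} [CommRing S] (P : SP R) (f : R →+* S) (hf : Function.Surjective f) :
    SP S where
  A := P.A.map f
  B := P.B.map f
  sum_eq := by
    have := congrArg (Matrix.map · (⇑f)) P.sum_eq
    simpa [Matrix.map_add] using this
  mAA := by rw [← Matrix.map_mul, P.mAA]
  mBB := by rw [← Matrix.map_mul, P.mBB]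
  mAB := by rw [← Matrix.map_mul, P.mAB]; ext i j; simp
  mBA := by rw [← Matrix.map_mul, P.mBA]; ext i j; simp
  trA := by
    have : (P.A.map f).trace = f (P.A.trace) := by
      simp [Matrix.trace_fin_two, Matrix.map_apply]
    rw [this, P.trA, _root_.map_one]
  trB := by
    have : (P.B.map f).trace = f (P.B.trace) := by
      simp [Matrix.trace_fin_two, Matrix.map_apply]
    rw [this, P.trB, _root_.map_one]
  det_eq := by
    intro s t
    obtain ⟨s₀, rfl⟩ := hf s
    obtain ⟨t₀, rfl⟩ := hf t
    have hmap : (s₀ • P.A + t₀ • P.B).map f = f s₀ • P.A.map f + f t₀ • P.B.map f := by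
      ext i j; simp [Matrix.map_apply]
    rw [← hmap, ← RingHom.mapMatrix_apply, ← RingHom.map_det, P.det_eq, _root_.map_mul]

lemma map_Phi {S : Type*} [CommRing S] (P : SP R) (f : R →+* S) (hf : Function.Surjective f)
    (s t : R) : (P.map f hf).Phi (f s) (f t) = (P.Phi s t).map f := by
  ext i j
  simp [Phi, SP.map, Matrix.map_apply]

end SP
end SPdef



variable {p : ℕ} [Fact p.Prime]

lemma padic_isUnit_iff_not_dvd (z : ℤ_[p]) : IsUnit z ↔ ¬ ((p:ℤ_[p]) ∣ z) := by
  rw [PadicInt.isUnit_iff, ← PadicInt.norm_lt_one_iff_dvd]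
  constructor
  · intro h; rw [h]; exact lt_irrefl 1
  · intro h; exact le_antisymm (PadicInt.norm_le_one z) (not_lt.mp h)

lemma padic_two_unit (hodd : Odd p) : IsUnit (2 : ℤ_[p]) := by
  rw [padic_isUnit_iff_not_dvd]
  intro h
  have h1 : ‖(2:ℤ_[p])‖ < 1 := (PadicInt.norm_lt_one_iff_dvd _).mpr h
  have h2 : ((2 : ℤ) : ℤ_[p]) = (2 : ℤ_[p]) := by push_cast; ring
  rw [← h2, PadicInt.norm_int_lt_one_iff_dvd] at h1
  have hp2 : p ∣ 2 := by exact_mod_cast h1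
  have hp := Fact.out (p := p.Prime)
  have : p = 2 := (Nat.prime_dvd_prime_iff_eq hp Nat.prime_two).mp hp2
  rw [this] at hodd
  exact (by decide : ¬ Odd 2) hodd

lemma exists_SP {c d : ℤ_[p]} (hsplit : SplitParams p c d) :
    ∃ P : SP ℤ_[p], ∀ M : Matrix (Fin 2) (Fin 2) ℤ_[p],
      (∃ x y, M = !![x, d * y; y, x + c * y]) ↔ ∃ s t : ℤ_[p], M = s • P.A + t • P.B := by
  rcases hsplit with ⟨hodd, hc, u, hu, hd⟩ | ⟨hp2, hc, hd⟩
  · subst hc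
    obtain ⟨h, h2⟩ : ∃ h : ℤ_[p], 2 * h = 1 := by
      obtain ⟨w, hw⟩ := padic_two_unit hodd
      exact ⟨↑w⁻¹, by rw [← hw]; exact w.mul_inv⟩
    obtain ⟨ui, hui⟩ : ∃ ui : ℤ_[p], u * ui = 1 := by
      obtain ⟨w, hw⟩ := hu
      exact ⟨↑w⁻¹, by rw [← hw]; exact w.mul_inv⟩
    refine ⟨⟨!![h, u*h; ui*h, h], !![h, -(u*h); -(ui*h), h], ?_, ?_, ?_, ?_, ?_, ?_, ?_, ?_⟩, ?_⟩
    · ext i j; fin_cases i <;> fin_cases j <;>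
        simp [Matrix.one_apply] <;> first
        | ring1
        | linear_combination h2
        | linear_combination -h2
        | linear_combination h*h*hui + h*h2
        | linear_combination -(h*h*hui) - h*h2
        | linear_combination (u*h)*h2
        | linear_combination (-(u*h))*h2
        | linear_combination (ui*h)*h2
        | linear_combination (-(ui*h))*h2
        | linear_combination (h*h)*hui
        | linear_combination (-(h*h))*hui
    · ext i j; fin_cases i <;> fin_cases j <;>
        simp [Matrix.mul_apply, Fin.sum_univ_two] <;> first
        | ring1
        | linear_combination h2
        | linear_combination -h2
        | linear_combination h*h*hui + h*h2
        | linear_combination -(h*h*hui) - h*h2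
        | linear_combination (u*h)*h2
        | linear_combination (-(u*h))*h2
        | linear_combination (ui*h)*h2
        | linear_combination (-(ui*h))*h2
        | linear_combination (h*h)*hui
        | linear_combination (-(h*h))*hui
    · ext i j; fin_cases i <;> fin_cases j <;>
        simp [Matrix.mul_apply, Fin.sum_univ_two] <;> first
        | ring1
        | linear_combination h2
        | linear_combination -h2
        | linear_combination h*h*hui + h*h2
        | linear_combination -(h*h*hui) - h*h2
        | linear_combination (u*h)*h2
        | linear_combination (-(u*h))*h2
        | linear_combination (ui*h)*h2
        | linear_combination (-(ui*h))*h2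
        | linear_combination (h*h)*hui
        | linear_combination (-(h*h))*hui
    · ext i j; fin_cases i <;> fin_cases j <;>
        simp [Matrix.mul_apply, Fin.sum_univ_two] <;> first
        | ring1
        | linear_combination h2
        | linear_combination -h2
        | linear_combination h*h*hui + h*h2
        | linear_combination -(h*h*hui) - h*h2
        | linear_combination (u*h)*h2
        | linear_combination (-(u*h))*h2
        | linear_combination (ui*h)*h2
        | linear_combination (-(ui*h))*h2
        | linear_combination (h*h)*hui
        | linear_combination (-(h*h))*hui
    · ext i j; fin_cases i <;> fin_cases j <;>
        simp [Matrix.mul_apply, Fin.sum_univ_two] <;> first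
        | ring1
        | linear_combination h2
        | linear_combination -h2
        | linear_combination h*h*hui + h*h2
        | linear_combination -(h*h*hui) - h*h2
        | linear_combination (u*h)*h2
        | linear_combination (-(u*h))*h2
        | linear_combination (ui*h)*h2
        | linear_combination (-(ui*h))*h2
        | linear_combination (h*h)*hui
        | linear_combination (-(h*h))*hui
    · simp [Matrix.trace_fin_two]; first
        | ring1
        | linear_combination h2
        | linear_combination -h2
        | linear_combination h*h*hui + h*h2
        | linear_combination -(h*h*hui) - h*h2
        | linear_combination (u*h)*h2
        | linear_combination (-(u*h))*h2
        | linear_combination (ui*h)*h2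
        | linear_combination (-(ui*h))*h2
        | linear_combination (h*h)*hui
        | linear_combination (-(h*h))*hui
    · simp [Matrix.trace_fin_two]; first
        | ring1
        | linear_combination h2
        | linear_combination -h2
        | linear_combination h*h*hui + h*h2
        | linear_combination -(h*h*hui) - h*h2
        | linear_combination (u*h)*h2
        | linear_combination (-(u*h))*h2
        | linear_combination (ui*h)*h2
        | linear_combination (-(ui*h))*h2
        | linear_combination (h*h)*hui
        | linear_combination (-(h*h))*hui
    · intro s t
      rw [Matrix.det_fin_two]
      simp [Matrix.add_apply, Matrix.smul_apply, smul_eq_mul]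
      linear_combination (-(s-t)^2*h^2)*hui + (s*t*(2*h+1))*h2
    · intro M
      constructor
      · rintro ⟨x, y, rfl⟩
        refine ⟨x + u*y, x - u*y, ?_⟩
        ext i j; fin_cases i <;> fin_cases j <;>
          simp [Matrix.add_apply, Matrix.smul_apply, smul_eq_mul, hd] <;>
          first
          | ring1
          | linear_combination (-x)*h2
          | linear_combination x*h2
          | linear_combination (-(u*u*y))*h2
          | linear_combination (u*u*y)*h2
          | linear_combination (-y)*hui + (-(u*ui*y))*h2
          | linear_combination y*hui + (u*ui*y)*h2
      · rintro ⟨s, t, rfl⟩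
        refine ⟨(s+t)*h, ui*h*(s-t), ?_⟩
        ext i j; fin_cases i <;> fin_cases j <;>
          simp [Matrix.add_apply, Matrix.smul_apply, smul_eq_mul, hd] <;>
          first
          | ring1
          | linear_combination (u*h*(s-t))*hui
          | linear_combination (-(u*h*(s-t)))*hui
  · subst hc hd
    refine ⟨⟨!![1, 0; -1, 0], !![0, 0; 1, 1], ?_, ?_, ?_, ?_, ?_, ?_, ?_, ?_⟩, ?_⟩
    · ext i j; fin_cases i <;> fin_cases j <;> simp [Matrix.one_apply]
    · ext i j; fin_cases i <;> fin_cases j <;> simp [Matrix.mul_apply, Fin.sum_univ_two]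
    · ext i j; fin_cases i <;> fin_cases j <;> simp [Matrix.mul_apply, Fin.sum_univ_two]
    · ext i j; fin_cases i <;> fin_cases j <;> simp [Matrix.mul_apply, Fin.sum_univ_two]
    · ext i j; fin_cases i <;> fin_cases j <;> simp [Matrix.mul_apply, Fin.sum_univ_two]
    · simp [Matrix.trace_fin_two]
    · simp [Matrix.trace_fin_two]
    · intro s t
      rw [Matrix.det_fin_two]
      simp [Matrix.add_apply, Matrix.smul_apply, smul_eq_mul] <;> ring1
    · intro M
      constructor
      · rintro ⟨x, y, rfl⟩
        refine ⟨x, x + y, ?_⟩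
        ext i j; fin_cases i <;> fin_cases j <;>
          simp [Matrix.add_apply, Matrix.smul_apply, smul_eq_mul] <;> ring
      · rintro ⟨s, t, rfl⟩
        refine ⟨s, t - s, ?_⟩
        ext i j; fin_cases i <;> fin_cases j <;>
          simp [Matrix.add_apply, Matrix.smul_apply, smul_eq_mul] <;> ring


variable {p : ℕ} [Fact p.Prime] {n : ℕ}

lemma hpn_pos : 0 < p ^ n := Nat.pow_pos (Fact.out (p := p.Prime)).pos

lemma zmod_notUnit_p (hn : 1 ≤ n) : ¬ IsUnit ((p : ZMod (p^n))) := by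
  intro h
  have h' : IsUnit (((p:ℕ) : ZMod (p^n))) := h
  have hcop := (ZMod.isUnit_iff_coprime p (p^n)).mp h'
  have : p = 1 := Nat.Coprime.eq_one_of_dvd hcop (dvd_pow_self p (by omega))
  exact (Fact.out (p := p.Prime)).one_lt.ne' this

lemma zmod_isUnit_iff (hn : 1 ≤ n) (z : ZMod (p^n)) :
    IsUnit z ↔ ¬ ((p : ZMod (p^n)) ∣ z) := by
  haveI : NeZero (p^n) := ⟨(hpn_pos (p := p)).ne'⟩
  constructor
  · intro hz ⟨w, hw⟩
    exact zmod_notUnit_p hn (isUnit_of_mul_isUnit_left (hw ▸ hz))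
  · intro hz
    have hnatdvd : ¬ (p ∣ z.val) := by
      rintro ⟨m, hm⟩
      exact hz ⟨(m : ZMod (p^n)), by
        conv_lhs => rw [← ZMod.natCast_rightInverse z]
        rw [hm]; push_cast; ring⟩
    have hcop : Nat.Coprime z.val p :=
      (Nat.Prime.coprime_iff_not_dvd (Fact.out (p := p.Prime))).mpr hnatdvd |>.symm
    have : IsUnit ((z.val : ℕ) : ZMod (p^n)) :=
      (ZMod.isUnit_iff_coprime z.val (p^n)).mpr (hcop.pow_right n)
    rwa [ZMod.natCast_rightInverse z] at this

lemma zmod_isUnit_of_dvd_sub_one (hn : 1 ≤ n) {z : ZMod (p^n)}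
    (h : (p : ZMod (p^n)) ∣ z - 1) : IsUnit z := by
  rw [zmod_isUnit_iff hn]
  intro hz
  have h1 : (p : ZMod (p^n)) ∣ 1 := by
    have := hz.sub h
    simpa using this
  exact zmod_notUnit_p hn (isUnit_of_dvd_one h1)

lemma card_dvd_set (j : ℕ) (hj : j ≤ n) :
    ({z : ZMod (p^n) | ((p : ZMod (p^n))^j) ∣ z}).ncard = p^(n-j) := by
  haveI : NeZero (p^n) := ⟨(hpn_pos (p := p)).ne'⟩
  haveI : NeZero (p^(n-j)) := ⟨(hpn_pos (p := p)).ne'⟩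
  have hp1 : 1 < p := (Fact.out (p := p.Prime)).one_lt
  set g : ZMod (p^(n-j)) → ZMod (p^n) := fun w => (p:ZMod (p^n))^j * ((w.val : ℕ) : ZMod (p^n))
    with hg
  have hginj : Function.Injective g := by
    intro w w' hww
    have h1 : (((p^j * w.val : ℕ)) : ZMod (p^n)) = ((p^j * w'.val : ℕ) : ZMod (p^n)) := by
      push_cast; simpa [hg] using hww
    rw [ZMod.natCast_eq_natCast_iff] at h1
    rw [show p^n = p^j * p^(n-j) by rw [← pow_add]; congr 1; omega] at h1
    have h2 := Nat.ModEq.mul_left_cancel' (by positivity) h1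
    have h3 : ((w.val : ℕ) : ZMod (p^(n-j))) = ((w'.val : ℕ) : ZMod (p^(n-j))) :=
      (ZMod.natCast_eq_natCast_iff _ _ _).mpr h2
    rwa [ZMod.natCast_rightInverse w, ZMod.natCast_rightInverse w'] at h3
  have hrange : {z : ZMod (p^n) | ((p : ZMod (p^n))^j) ∣ z} = Set.range g := by
    ext z
    simp only [Set.mem_setOf_eq, Set.mem_range]
    constructor
    · rintro ⟨w, hw⟩
      have hdvdval : p^j ∣ z.val := by
        have : z.val ≡ (p^j * w.val : ℕ) [MOD p^n] := by
          rw [← ZMod.natCast_eq_natCast_iff]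
          push_cast
          rw [ZMod.natCast_rightInverse z, ZMod.natCast_rightInverse w, hw]
        have := this.of_dvd (pow_dvd_pow p hj)
        have h0 : (p^j * w.val) % p^j = 0 := Nat.mul_mod_right _ _
        have : z.val % p^j = 0 := by
          unfold Nat.ModEq at this; omega
        exact Nat.dvd_of_mod_eq_zero this
      obtain ⟨m, hm⟩ := hdvdval
      have hmlt : m < p^(n-j) := by
        have hz : z.val < p^n := ZMod.val_lt z
        rw [hm] at hz
        rw [show p^n = p^j * p^(n-j) by rw [← pow_add]; congr 1; omega] at hz
        exact lt_of_mul_lt_mul_left hz (Nat.zero_le _)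
      refine ⟨(m : ZMod (p^(n-j))), ?_⟩
      have hval : ((m : ZMod (p^(n-j))).val) = m := ZMod.val_cast_of_lt hmlt
      rw [hg]
      simp only [hval]
      conv_rhs => rw [← ZMod.natCast_rightInverse z]
      rw [hm]; push_cast; ring
    · rintro ⟨w, rfl⟩
      exact ⟨_, rfl⟩
  rw [hrange, ← Nat.card_coe_set_eq, Nat.card_range_of_injective hginj,
    Nat.card_eq_fintype_card, ZMod.card]

lemma card_dvd_sub_one (j : ℕ) (hj : j ≤ n) :
    ({z : ZMod (p^n) | ((p : ZMod (p^n))^j) ∣ z - 1}).ncard = p^(n-j) := by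
  have : {z : ZMod (p^n) | ((p : ZMod (p^n))^j) ∣ z - 1}
      = (fun z => z + 1) '' {z : ZMod (p^n) | ((p : ZMod (p^n))^j) ∣ z} := by
    ext z
    simp only [Set.mem_setOf_eq, Set.mem_image]
    constructor
    · intro h; exact ⟨z - 1, h, by ring⟩
    · rintro ⟨w, hw, rfl⟩; simpa using hw
  rw [this, Set.ncard_image_of_injective _ (add_left_injective 1), card_dvd_set j hj]

lemma card_units_set (hn : 1 ≤ n) :
    ({z : ZMod (p^n) | IsUnit z}).ncard = p^(n-1) * (p-1) := by
  haveI : NeZero (p^n) := ⟨(hpn_pos (p := p)).ne'⟩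
  have : {z : ZMod (p^n) | IsUnit z} = Set.range ((↑) : (ZMod (p^n))ˣ → ZMod (p^n)) := by
    ext z; simp [IsUnit, Set.mem_range, eq_comm]
  rw [this, ← Nat.card_coe_set_eq, Nat.card_range_of_injective Units.val_injective,
    Nat.card_eq_fintype_card, ZMod.card_units_eq_totient,
    Nat.totient_prime_pow (Fact.out (p := p.Prime)) (by omega)]

/-- cardinality of the exact-valuation unit sets -/
lemma card_S (k : ℕ) (hk : k + 1 ≤ n) :
    ({z : ZMod (p^n) | IsUnit z ∧ ((p : ZMod (p^n))^k) ∣ z - 1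
        ∧ ¬ ((p : ZMod (p^n))^(k+1)) ∣ z - 1}).ncard
      = if k = 0 then p^(n-1) * (p-1) - p^(n-1) else p^(n-k) - p^(n-k-1) := by
  have hn : 1 ≤ n := le_trans (by omega) hk
  rcases Nat.eq_zero_or_pos k with rfl | hkpos
  · have hsub : {z : ZMod (p^n) | ((p : ZMod (p^n))^(0+1)) ∣ z - 1}
        ⊆ {z : ZMod (p^n) | IsUnit z} := by
      intro z hz
      simp only [Set.mem_setOf_eq, zero_add, pow_one] at hz ⊢
      exact zmod_isUnit_of_dvd_sub_one hn hz
    have heq : {z : ZMod (p^n) | IsUnit z ∧ ((p : ZMod (p^n))^0) ∣ z - 1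
          ∧ ¬ ((p : ZMod (p^n))^(0+1)) ∣ z - 1}
        = {z : ZMod (p^n) | IsUnit z} \ {z : ZMod (p^n) | ((p : ZMod (p^n))^(0+1)) ∣ z - 1} := by
      ext z
      simp only [Set.mem_setOf_eq, Set.mem_diff, pow_zero]
      constructor
      · rintro ⟨h1, _, h3⟩; exact ⟨h1, h3⟩
      · rintro ⟨h1, h3⟩; exact ⟨h1, one_dvd _, h3⟩
    rw [heq, Set.ncard_diff hsub (Set.toFinite _), card_units_set hn,
      card_dvd_sub_one (0+1) (by omega), if_pos rfl]
  · rw [if_neg (by omega)]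
    have hsub : {z : ZMod (p^n) | ((p : ZMod (p^n))^(k+1)) ∣ z - 1}
        ⊆ {z : ZMod (p^n) | ((p : ZMod (p^n))^k) ∣ z - 1} := by
      intro z hz
      exact dvd_trans (pow_dvd_pow _ (by omega)) hz
    have heq : {z : ZMod (p^n) | IsUnit z ∧ ((p : ZMod (p^n))^k) ∣ z - 1
          ∧ ¬ ((p : ZMod (p^n))^(k+1)) ∣ z - 1}
        = {z : ZMod (p^n) | ((p : ZMod (p^n))^k) ∣ z - 1}
          \ {z : ZMod (p^n) | ((p : ZMod (p^n))^(k+1)) ∣ z - 1} := by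
      ext z
      simp only [Set.mem_setOf_eq, Set.mem_diff]
      constructor
      · rintro ⟨_, h1, h2⟩; exact ⟨h1, h2⟩
      · rintro ⟨h1, h2⟩
        refine ⟨zmod_isUnit_of_dvd_sub_one hn (dvd_trans ?_ h1), h1, h2⟩
        conv_lhs => rw [← pow_one (p : ZMod (p^n))]
        exact pow_dvd_pow _ (by omega)
    rw [heq, Set.ncard_diff hsub (Set.toFinite _), card_dvd_sub_one k (by omega),
      card_dvd_sub_one (k+1) (by omega)]
    congr 1 <;> congr 1 <;> omega


variable {p : ℕ} [Fact p.Prime]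

lemma padic_p_ne_zero : ((p : ℤ_[p])) ≠ 0 := by
  have := (Fact.out (p := p.Prime)).ne_zero
  exact_mod_cast Nat.cast_ne_zero.mpr this

/-- exact valuation of a factor -/
lemma padic_val_factor {a m : ℕ} {e f : ℤ_[p]} (he : valEq e a)
    (hf : (p : ℤ_[p])^a ∣ f) (hef : valEq (e * f) (a + m)) : valEq f m := by
  obtain ⟨⟨u, hu⟩, hnd⟩ := he
  have hpu : ¬ ((p:ℤ_[p]) ∣ u) := by
    intro ⟨w, hw⟩
    exact hnd ⟨w, by rw [hu, hw, pow_succ]; ring⟩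
  have huu : IsUnit u := (padic_isUnit_iff_not_dvd u).mpr hpu
  constructor
  · have h1 : (p:ℤ_[p])^a * (p:ℤ_[p])^m ∣ (p:ℤ_[p])^a * (u * f) := by
      rw [← pow_add, ← mul_assoc, ← hu]
      exact hef.1
    have h2 : (p:ℤ_[p])^m ∣ u * f :=
      (mul_dvd_mul_iff_left (pow_ne_zero a padic_p_ne_zero)).mp h1
    exact huu.dvd_mul_left.mp h2
  · intro ⟨w, hw⟩
    exact hef.2 ⟨u * w, by rw [hu, hw, pow_add, pow_succ]; ring⟩

lemma padic_split_val {a b : ℕ} {e f : ℤ_[p]}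
    (h1 : (p:ℤ_[p])^a ∣ e) (h2 : (p:ℤ_[p])^a ∣ f)
    (h3 : ¬ ((p:ℤ_[p])^(a+1) ∣ e ∧ (p:ℤ_[p])^(a+1) ∣ f))
    (h4 : valEq (e * f) (2*a + b)) :
    (valEq e a ∧ valEq f (a + b)) ∨ (valEq e (a + b) ∧ valEq f a) := by
  have hab : 2*a + b = a + (a + b) := by omega
  by_cases hc : (p:ℤ_[p])^(a+1) ∣ e
  · have hfa : valEq f a := ⟨h2, fun hf => h3 ⟨hc, hf⟩⟩
    right
    refine ⟨padic_val_factor hfa h1 ?_, hfa⟩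
    rw [mul_comm] at h4
    rwa [hab] at h4
  · have hea : valEq e a := ⟨h1, hc⟩
    left
    refine ⟨hea, padic_val_factor hea h2 ?_⟩
    rwa [hab] at h4

lemma padic_split_val_rev {a b : ℕ} {e f : ℤ_[p]}
    (h : (valEq e a ∧ valEq f (a + b)) ∨ (valEq e (a + b) ∧ valEq f a)) :
    ((p:ℤ_[p])^a ∣ e ∧ (p:ℤ_[p])^a ∣ f)
      ∧ ¬ ((p:ℤ_[p])^(a+1) ∣ e ∧ (p:ℤ_[p])^(a+1) ∣ f)
      ∧ valEq (e * f) (2*a + b) := by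
  have key : ∀ e f : ℤ_[p], valEq e a → valEq f (a + b) →
      ((p:ℤ_[p])^a ∣ e ∧ (p:ℤ_[p])^a ∣ f)
        ∧ ¬ ((p:ℤ_[p])^(a+1) ∣ e ∧ (p:ℤ_[p])^(a+1) ∣ f)
        ∧ valEq (e * f) (2*a + b) := by
    intro e f he hf
    refine ⟨⟨he.1, dvd_trans (pow_dvd_pow _ (by omega)) hf.1⟩,
      fun hh => he.2 hh.1, ?_, ?_⟩
    · have := mul_dvd_mul he.1 hf.1
      rwa [← pow_add, show a + (a+b) = 2*a+b by omega] at this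
    · -- ¬ p^(2a+b+1) ∣ e*f
      obtain ⟨u, hu⟩ := he.1
      have hpu : ¬ ((p:ℤ_[p]) ∣ u) := fun ⟨w, hw⟩ =>
        he.2 ⟨w, by rw [hu, hw, pow_succ]; ring⟩
      obtain ⟨v, hv⟩ := hf.1
      have hpv : ¬ ((p:ℤ_[p]) ∣ v) := fun ⟨w, hw⟩ =>
        hf.2 ⟨w, by rw [hv, hw, pow_succ]; ring⟩
      intro hdvd
      have heq : e * f = (p:ℤ_[p])^(2*a+b) * (u * v) := by
        rw [hu, hv, show (2*a+b) = a + (a+b) by omega, pow_add]; ring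
      have h5 : (p:ℤ_[p])^(2*a+b) * (p:ℤ_[p]) ∣ (p:ℤ_[p])^(2*a+b) * (u*v) := by
        rw [← heq, ← pow_succ]; exact hdvd
      have h6 : (p:ℤ_[p]) ∣ u * v :=
        (mul_dvd_mul_iff_left (pow_ne_zero _ padic_p_ne_zero)).mp h5
      rcases (PadicInt.prime_p (p := p)).dvd_mul.mp h6 with h | h
      · exact hpu h
      · exact hpv h
  rcases h with ⟨he, hf⟩ | ⟨he, hf⟩
  · exact key e f he hf
  · have := key f e hf he
    rw [mul_comm] at this
    tauto



lemma hpn_pos' {n : ℕ} : 0 < p ^ n := Nat.pow_pos (Fact.out (p := p.Prime)).pos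

def mkGL {R : Type*} [CommRing R] (P : SP R) (s t : Rˣ) : GL (Fin 2) R :=
  ⟨P.Phi ↑s ↑t, P.Phi ↑s⁻¹ ↑t⁻¹,
   by rw [SP.Phi_mul, Units.mul_inv, Units.mul_inv, SP.Phi_one],
   by rw [SP.Phi_mul, Units.inv_mul, Units.inv_mul, SP.Phi_one]⟩

lemma mkGL_coe {R : Type*} [CommRing R] (P : SP R) (s t : Rˣ) :
    ((mkGL P s t : GL (Fin 2) R) : Matrix (Fin 2) (Fin 2) R) = P.Phi ↑s ↑t := rfl

lemma mkGL_inj {R : Type*} [CommRing R] (P : SP R) :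
    Function.Injective (fun st : Rˣ × Rˣ => mkGL P st.1 st.2) := by
  rintro ⟨s, t⟩ ⟨s', t'⟩ h
  have h' := congrArg (Units.val) h
  obtain ⟨h1, h2⟩ := P.Phi_inj h'
  simp only [Prod.mk.injEq]
  exact ⟨Units.ext h1, Units.ext h2⟩

lemma toZModPow_surj (n : ℕ) : Function.Surjective (PadicInt.toZModPow (p := p) n) := by
  haveI : NeZero (p^n) := ⟨(hpn_pos' (p := p)).ne'⟩
  intro z
  exact ⟨((z.val : ℕ) : ℤ_[p]), by rw [map_natCast, ZMod.natCast_rightInverse z]⟩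

section Main
variable (P : SP ℤ_[p]) (C : Subgroup (GL (Fin 2) ℤ_[p]))
  (hmem : ∀ M : GL (Fin 2) ℤ_[p], M ∈ C ↔
    ∃ s t : ℤ_[p], (M : Matrix (Fin 2) (Fin 2) ℤ_[p]) = P.Phi s t)
include hmem

lemma mem_C_iff (M : GL (Fin 2) ℤ_[p]) :
    M ∈ C ↔ ∃ s t : ℤ_[p]ˣ, M = mkGL P s t := by
  rw [hmem]
  constructor
  · rintro ⟨s, t, hM⟩
    have hdet : IsUnit ((M : Matrix (Fin 2) (Fin 2) ℤ_[p]).det) :=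
      ((Matrix.isUnit_iff_isUnit_det _).mp (Units.isUnit M))
    rw [hM, P.Phi_det] at hdet
    have hs : IsUnit s := isUnit_of_mul_isUnit_left hdet
    have ht : IsUnit t := isUnit_of_mul_isUnit_right hdet
    refine ⟨hs.unit, ht.unit, Units.ext ?_⟩
    rw [mkGL_coe, IsUnit.unit_spec, IsUnit.unit_spec]
    exact hM
  · rintro ⟨s, t, rfl⟩
    exact ⟨↑s, ↑t, rfl⟩

def Cnd (a b : ℕ) (s t : ℤ_[p]ˣ) : Prop :=
  (valEq ((s:ℤ_[p]) - 1) a ∧ valEq ((t:ℤ_[p]) - 1) (a + b)) ∨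
    (valEq ((s:ℤ_[p]) - 1) (a + b) ∧ valEq ((t:ℤ_[p]) - 1) a)

lemma mem_Mset_iff (a b : ℕ) (M : GL (Fin 2) ℤ_[p]) :
    M ∈ Mset C a b ↔ ∃ s t : ℤ_[p]ˣ, M = mkGL P s t ∧ Cnd a b s t := by
  constructor
  · rintro ⟨hMC, hE⟩
    obtain ⟨s, t, rfl⟩ := (mem_C_iff P C hmem M).mp hMC
    refine ⟨s, t, rfl, ?_⟩
    have hM1 : ((mkGL P s t : GL (Fin 2) ℤ_[p]) : Matrix (Fin 2) (Fin 2) ℤ_[p]) - 1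
        = P.Phi ((s:ℤ_[p]) - 1) ((t:ℤ_[p]) - 1) := by
      rw [mkGL_coe, ← P.Phi_one, P.Phi_sub]
    obtain ⟨h1, h2, h3⟩ := hE
    rw [modI, hM1] at h1 h2
    rw [hM1, P.Phi_det] at h3
    rw [P.dvd_iff] at h1 h2
    exact padic_split_val h1.1 h1.2 h2 h3
  · rintro ⟨s, t, rfl, hcnd⟩
    have hM1 : ((mkGL P s t : GL (Fin 2) ℤ_[p]) : Matrix (Fin 2) (Fin 2) ℤ_[p]) - 1
        = P.Phi ((s:ℤ_[p]) - 1) ((t:ℤ_[p]) - 1) := by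
      rw [mkGL_coe, ← P.Phi_one, P.Phi_sub]
    obtain ⟨hd, hnd, hval⟩ := padic_split_val_rev hcnd
    refine ⟨(mem_C_iff P C hmem _).mpr ⟨s, t, rfl⟩, ?_, ?_, ?_⟩
    · rw [modI, hM1, P.dvd_iff]; exact hd
    · rw [modI, hM1, P.dvd_iff]; exact hnd
    · rw [hM1, P.Phi_det]; exact hval
end Main

section Red
variable (n : ℕ)

lemma red_mkGL (P : SP ℤ_[p]) (s t : ℤ_[p]ˣ) :
    Matrix.GeneralLinearGroup.map (PadicInt.toZModPow (p := p) n) (mkGL P s t)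
      = mkGL (P.map (PadicInt.toZModPow n) (toZModPow_surj n))
          (Units.map (PadicInt.toZModPow n).toMonoidHom s)
          (Units.map (PadicInt.toZModPow n).toMonoidHom t) := by
  apply Units.ext
  show (RingHom.mapMatrix (PadicInt.toZModPow (p := p) n)) (P.Phi ↑s ↑t) = _
  rw [RingHom.mapMatrix_apply, ← SP.map_Phi P (PadicInt.toZModPow n) (toZModPow_surj n)]
  rfl

lemma lift_unit (hn : 1 ≤ n) (x : (ZMod (p^n))ˣ) :
    ∃ s : ℤ_[p]ˣ, Units.map (PadicInt.toZModPow (p := p) n).toMonoidHom s = x := by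
  haveI : NeZero (p^n) := ⟨(hpn_pos' (p := p)).ne'⟩
  set s₀ : ℤ_[p] := (((x : ZMod (p^n)).val : ℕ) : ℤ_[p]) with hs₀
  have hf : PadicInt.toZModPow n s₀ = (x : ZMod (p^n)) := by
    rw [hs₀, map_natCast, ZMod.natCast_rightInverse]
  have hs : IsUnit s₀ := by
    rw [padic_isUnit_iff_not_dvd]
    rintro ⟨w, hw⟩
    have : ((p : ZMod (p^n))) ∣ (x : ZMod (p^n)) := by
      refine ⟨PadicInt.toZModPow n w, ?_⟩
      rw [← hf, hw, _root_.map_mul, map_natCast]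
    exact (zmod_isUnit_iff hn _).mp (Units.isUnit x) this
  refine ⟨hs.unit, Units.ext ?_⟩
  show PadicInt.toZModPow n (hs.unit : ℤ_[p]) = (x : ZMod (p^n))
  rw [IsUnit.unit_spec, hf]

lemma dvd_transfer {k : ℕ} (hk : k ≤ n) (e : ℤ_[p]) :
    ((p : ZMod (p^n))^k ∣ PadicInt.toZModPow n e) ↔ ((p : ℤ_[p])^k ∣ e) := by
  constructor
  · rintro ⟨w, hw⟩
    obtain ⟨w₀, rfl⟩ := toZModPow_surj n w
    have hker : PadicInt.toZModPow n (e - (p:ℤ_[p])^k * w₀) = 0 := by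
      rw [map_sub, _root_.map_mul, map_pow, map_natCast, hw, sub_self]
    rw [← RingHom.mem_ker, PadicInt.ker_toZModPow, Ideal.mem_span_singleton] at hker
    have h1 : (p:ℤ_[p])^k ∣ e - (p:ℤ_[p])^k * w₀ :=
      dvd_trans (pow_dvd_pow _ hk) hker
    have h2 : (p:ℤ_[p])^k ∣ (p:ℤ_[p])^k * w₀ := Dvd.intro _ rfl
    simpa using h1.add h2
  · rintro ⟨w, rfl⟩
    exact ⟨PadicInt.toZModPow n w, by rw [_root_.map_mul, map_pow, map_natCast]⟩

def Q (k : ℕ) (x : (ZMod (p^n))ˣ) : Prop :=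
  ((p : ZMod (p^n))^k ∣ (x : ZMod (p^n)) - 1) ∧
    ¬ ((p : ZMod (p^n))^(k+1) ∣ (x : ZMod (p^n)) - 1)

lemma valEq_red {k : ℕ} (hk : k + 1 ≤ n) (s : ℤ_[p]ˣ)
    (x : (ZMod (p^n))ˣ) (hx : Units.map (PadicInt.toZModPow (p := p) n).toMonoidHom s = x) :
    valEq ((s : ℤ_[p]) - 1) k ↔ Q n k x := by
  have hcoe : (x : ZMod (p^n)) - 1 = PadicInt.toZModPow n ((s : ℤ_[p]) - 1) := by
    rw [← hx]
    show (PadicInt.toZModPow n (s : ℤ_[p])) - 1 = _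
    rw [map_sub, _root_.map_one]
  unfold valEq Q
  rw [hcoe, dvd_transfer n (by omega), dvd_transfer n (by omega)]

def Tset (a b : ℕ) : Set ((ZMod (p^n))ˣ × (ZMod (p^n))ˣ) :=
  {st | (Q n a st.1 ∧ Q n (a+b) st.2) ∨ (Q n (a+b) st.1 ∧ Q n a st.2)}

end Red

section Images
variable (P : SP ℤ_[p]) (C : Subgroup (GL (Fin 2) ℤ_[p]))
  (hmem : ∀ M : GL (Fin 2) ℤ_[p], M ∈ C ↔
    ∃ s t : ℤ_[p], (M : Matrix (Fin 2) (Fin 2) ℤ_[p]) = P.Phi s t)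
include hmem

lemma im_C (n : ℕ) (hn : 1 ≤ n) :
    (Matrix.GeneralLinearGroup.map (PadicInt.toZModPow (p := p) n)) '' (C : Set _)
      = Set.range (fun st : (ZMod (p^n))ˣ × (ZMod (p^n))ˣ =>
          mkGL (P.map (PadicInt.toZModPow n) (toZModPow_surj n)) st.1 st.2) := by
  ext N
  constructor
  · rintro ⟨M, hMC, rfl⟩
    obtain ⟨s, t, rfl⟩ := (mem_C_iff P C hmem M).mp hMC
    exact ⟨⟨_, _⟩, (red_mkGL n P s t).symm⟩
  · rintro ⟨⟨x, y⟩, rfl⟩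
    obtain ⟨s, hs⟩ := lift_unit n hn x
    obtain ⟨t, ht⟩ := lift_unit n hn y
    refine ⟨mkGL P s t, (mem_C_iff P C hmem _).mpr ⟨s, t, rfl⟩, ?_⟩
    rw [red_mkGL n P s t, hs, ht]

lemma im_M (a b : ℕ) :
    (Matrix.GeneralLinearGroup.map (PadicInt.toZModPow (p := p) (a+b+1))) '' (Mset C a b)
      = (fun st : (ZMod (p^(a+b+1)))ˣ × (ZMod (p^(a+b+1)))ˣ =>
          mkGL (P.map (PadicInt.toZModPow (a+b+1)) (toZModPow_surj (a+b+1))) st.1 st.2)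
        '' Tset (a+b+1) a b := by
  ext N
  constructor
  · rintro ⟨M, hM, rfl⟩
    obtain ⟨s, t, rfl, hcnd⟩ := (mem_Mset_iff P C hmem a b M).mp hM
    refine ⟨⟨Units.map (PadicInt.toZModPow (a+b+1)).toMonoidHom s,
      Units.map (PadicInt.toZModPow (a+b+1)).toMonoidHom t⟩, ?_, (red_mkGL (a+b+1) P s t).symm⟩
    rcases hcnd with ⟨h1, h2⟩ | ⟨h1, h2⟩
    · exact Or.inl ⟨(valEq_red (a+b+1) (by omega) s _ rfl).mp h1,
        (valEq_red (a+b+1) (by omega) t _ rfl).mp h2⟩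
    · exact Or.inr ⟨(valEq_red (a+b+1) (by omega) s _ rfl).mp h1,
        (valEq_red (a+b+1) (by omega) t _ rfl).mp h2⟩
  · rintro ⟨⟨x, y⟩, hT, rfl⟩
    obtain ⟨s, hs⟩ := lift_unit (a+b+1) (by omega) x
    obtain ⟨t, ht⟩ := lift_unit (a+b+1) (by omega) y
    refine ⟨mkGL P s t, (mem_Mset_iff P C hmem a b _).mpr ⟨s, t, rfl, ?_⟩, ?_⟩
    · rcases hT with ⟨h1, h2⟩ | ⟨h1, h2⟩
      · exact Or.inl ⟨(valEq_red (a+b+1) (by omega) s x hs).mpr h1,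
          (valEq_red (a+b+1) (by omega) t y ht).mpr h2⟩
      · exact Or.inr ⟨(valEq_red (a+b+1) (by omega) s x hs).mpr h1,
          (valEq_red (a+b+1) (by omega) t y ht).mpr h2⟩
    · rw [red_mkGL (a+b+1) P s t, hs, ht]
end Images

lemma set_prod_ncard {α β : Type*} (s : Set α) (t : Set β) :
    (s ×ˢ t).ncard = s.ncard * t.ncard := by
  rw [← Nat.card_coe_set_eq, ← Nat.card_coe_set_eq, ← Nat.card_coe_set_eq,
    ← Nat.card_prod]
  exact Nat.card_congr (Equiv.Set.prod s t)

/-- value of the count of exact-valuation elements -/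
def cSv (p n k : ℕ) : ℕ :=
  if k = 0 then p^(n-1) * (p-1) - p^(n-1) else p^(n-k) - p^(n-k-1)

lemma Sk_card (n k : ℕ) (hk : k + 1 ≤ n) :
    ({x : (ZMod (p^n))ˣ | Q n k x}).ncard = cSv p n k := by
  have himg : Units.val '' {x : (ZMod (p^n))ˣ | Q n k x}
      = {z : ZMod (p^n) | IsUnit z ∧ ((p : ZMod (p^n))^k) ∣ z - 1
          ∧ ¬ ((p : ZMod (p^n))^(k+1)) ∣ z - 1} := by
    ext z
    constructor
    · rintro ⟨x, hx, rfl⟩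
      exact ⟨Units.isUnit x, hx.1, hx.2⟩
    · rintro ⟨hu, h1, h2⟩
      refine ⟨hu.unit, ?_, hu.unit_spec⟩
      show Q n k hu.unit
      unfold Q
      rw [hu.unit_spec]
      exact ⟨h1, h2⟩
  have := congrArg Set.ncard himg
  rw [Set.ncard_image_of_injective _ Units.val_injective] at this
  rw [this, card_S k hk, cSv]

lemma Tcard (a b : ℕ) :
    (Tset (p := p) (a+b+1) a b).ncard
      = if b = 0 then (cSv p (a+b+1) a)^2
        else 2 * cSv p (a+b+1) a * cSv p (a+b+1) (a+b) := by
  have hTeq : Tset (a+b+1) a b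
      = ({x : (ZMod (p^(a+b+1)))ˣ | Q (a+b+1) a x}
          ×ˢ {x : (ZMod (p^(a+b+1)))ˣ | Q (a+b+1) (a+b) x})
        ∪ ({x : (ZMod (p^(a+b+1)))ˣ | Q (a+b+1) (a+b) x}
          ×ˢ {x : (ZMod (p^(a+b+1)))ˣ | Q (a+b+1) a x}) := by
    ext ⟨x, y⟩
    simp only [Tset, Set.mem_setOf_eq, Set.mem_union, Set.mem_prod]
  rcases Nat.eq_zero_or_pos b with rfl | hb
  · rw [if_pos rfl]
    have ha0 : a + 0 = a := by omega
    rw [hTeq, ha0, Set.union_self, set_prod_ncard, Sk_card (a+0+1) a (by omega), sq]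
  · rw [if_neg (by omega)]
    have hdisj : Disjoint
        ({x : (ZMod (p^(a+b+1)))ˣ | Q (a+b+1) a x}
          ×ˢ {x : (ZMod (p^(a+b+1)))ˣ | Q (a+b+1) (a+b) x})
        ({x : (ZMod (p^(a+b+1)))ˣ | Q (a+b+1) (a+b) x}
          ×ˢ {x : (ZMod (p^(a+b+1)))ˣ | Q (a+b+1) a x}) := by
      rw [Set.disjoint_left]
      rintro ⟨x, y⟩ ⟨hx1, _⟩ ⟨hx2, _⟩
      exact hx1.2 (dvd_trans (pow_dvd_pow _ (by omega : a + 1 ≤ a + b)) hx2.1)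
    rw [hTeq, Set.ncard_union_eq hdisj (Set.toFinite _) (Set.toFinite _),
      set_prod_ncard, set_prod_ncard,
      Sk_card (a+b+1) a (by omega), Sk_card (a+b+1) (a+b) (by omega)]
    ring

section Cards
variable (P : SP ℤ_[p]) (C : Subgroup (GL (Fin 2) ℤ_[p]))
  (hmem : ∀ M : GL (Fin 2) ℤ_[p], M ∈ C ↔
    ∃ s t : ℤ_[p], (M : Matrix (Fin 2) (Fin 2) ℤ_[p]) = P.Phi s t)
include hmem

lemma denom_card (n : ℕ) (hn : 1 ≤ n) :
    ((Matrix.GeneralLinearGroup.map (PadicInt.toZModPow (p := p) n))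
        '' (C : Set (GL (Fin 2) ℤ_[p]))).ncard
      = (p^(n-1) * (p-1))^2 := by
  haveI : NeZero (p^n) := ⟨(hpn_pos' (p := p)).ne'⟩
  rw [im_C P C hmem n hn, ← Set.image_univ,
    Set.ncard_image_of_injective _ (mkGL_inj _), Set.ncard_univ, Nat.card_prod,
    Nat.card_eq_fintype_card, ZMod.card_units_eq_totient,
    Nat.totient_prime_pow (Fact.out (p := p.Prime)) (by omega), sq]

lemma numer_card (a b : ℕ) :
    ((Matrix.GeneralLinearGroup.map (PadicInt.toZModPow (p := p) (a+b+1))) '' Mset C a b).ncard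
      = if b = 0 then (cSv p (a+b+1) a)^2
        else 2 * cSv p (a+b+1) a * cSv p (a+b+1) (a+b) := by
  rw [im_M P C hmem a b, Set.ncard_image_of_injective _ (mkGL_inj _), Tcard a b]

end Cards


/-- the values `μ_{a,b}(C)` for a split Cartan subgroup. -/
theorem mu_split_Cartan_values
    (p : ℕ) [Fact p.Prime] (c d : ℤ_[p]) (C : Subgroup (GL (Fin 2) ℤ_[p]))
    (hC : IsCartan c d C) (hsplit : SplitParams p c d) (a b : ℕ) :
    mu p C a b =
      if a = 0 ∧ b = 0 then ((p : ℚ) - 2) ^ 2 / ((p : ℚ) - 1) ^ 2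
      else if a = 0 then 2 * ((p : ℚ) - 2) / ((p : ℚ) - 1) * ((p : ℚ) ^ b)⁻¹
      else if b = 0 then ((p : ℚ) ^ (2 * a))⁻¹
      else 2 * ((p : ℚ) ^ (2 * a + b))⁻¹ := by
  obtain ⟨P, hrange⟩ := exists_SP hsplit
  have hmem : ∀ M : GL (Fin 2) ℤ_[p], M ∈ C ↔
      ∃ s t : ℤ_[p], (M : Matrix (Fin 2) (Fin 2) ℤ_[p]) = P.Phi s t := by
    intro M
    have h1 : M ∈ C ↔ M ∈ CartanSet c d := by
      rw [← SetLike.mem_coe, hC]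
    rw [h1]
    exact hrange (M : Matrix (Fin 2) (Fin 2) ℤ_[p])
  have hd := denom_card P C hmem (a+b+1) (by omega)
  have hnum := numer_card P C hmem a b
  have hp2 : 2 ≤ p := (Fact.out (p := p.Prime)).two_le
  have hpQ : (2:ℚ) ≤ (p:ℚ) := by exact_mod_cast hp2
  have hp0 : (p:ℚ) ≠ 0 := by positivity
  have hp1 : (p:ℚ) - 1 ≠ 0 := by nlinarith
  unfold mu redGL
  rw [hnum, hd]
  have hcast1 : ((p^(a+b+1-1) * (p-1))^2 : ℕ) = (((p:ℚ)^(a+b) * ((p:ℚ)-1))^2 : ℚ) := by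
    have : a+b+1-1 = a+b := by omega
    rw [this]
    push_cast [Nat.cast_sub (by omega : 1 ≤ p)]
    ring
  rw [hcast1]
  rcases Nat.eq_zero_or_pos a with rfl | ha <;> rcases Nat.eq_zero_or_pos b with rfl | hb
  · -- a = 0, b = 0
    rw [if_pos rfl, if_pos ⟨rfl, rfl⟩]
    have : cSv p (0+0+1) 0 = p - 2 := by
      unfold cSv
      simp <;> omega
    rw [this]
    have h2 : ((p - 2 : ℕ) : ℚ) = (p:ℚ) - 2 := by
      push_cast [Nat.cast_sub hp2]; ring
    push_cast [h2]
    field_simp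
  · -- a = 0, b > 0
    rw [if_neg (by omega), if_neg (by simp; omega), if_pos rfl]
    have hA : cSv p (0+b+1) 0 = p^b * (p-1) - p^b := by
      unfold cSv; simp
    have hB : cSv p (0+b+1) (0+b) = p^(b+1-b) - p^(b+1-b-1) := by
      unfold cSv; rw [if_neg (by omega)]; congr 1 <;> congr 1 <;> omega
    rw [hA, hB]
    have e1 : ((p^b * (p-1) - p^b : ℕ) : ℚ) = (p:ℚ)^b * ((p:ℚ) - 2) := by
      rw [Nat.cast_sub (Nat.le_mul_of_pos_right _ (by omega))]
      push_cast [Nat.cast_sub (by omega : 1 ≤ p)]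
      ring
    have e2 : ((p^(b+1-b) - p^(b+1-b-1) : ℕ) : ℚ) = (p:ℚ) - 1 := by
      have h2 : b+1-b-1 = 0 := by omega
      have h1 : b+1-b = 1 := by omega
      rw [h2, h1]
      rw [Nat.cast_sub (Nat.pow_le_pow_right (by omega) (by omega))]
      push_cast; ring
    push_cast [e1, e2]
    have hpb : (p:ℚ)^b ≠ 0 := by positivity
    field_simp
    ring
  · -- a > 0, b = 0
    rw [if_pos rfl, if_neg (by omega), if_neg (by omega), if_pos rfl]
    have hA : cSv p (a+0+1) a = p - 1 := by
      unfold cSv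
      rw [if_neg (by omega)]
      have h2 : a+0+1-a-1 = 0 := by omega
      have h1 : a+0+1-a = 1 := by omega
      rw [h2, h1]
      simp
    rw [hA]
    have e1 : ((p - 1 : ℕ) : ℚ) = (p:ℚ) - 1 := by
      push_cast [Nat.cast_sub (by omega : 1 ≤ p)]; ring
    push_cast [e1]
    have hpa : (p:ℚ)^a ≠ 0 := by positivity
    have : (p:ℚ)^(2*a) = ((p:ℚ)^a)^2 := by rw [← pow_mul]; ring_nf
    rw [this]
    field_simp
    ring
  · -- a > 0, b > 0
    rw [if_neg (by omega), if_neg (by omega), if_neg (by omega), if_neg (by omega)]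
    have hA : cSv p (a+b+1) a = p^(b+1) - p^b := by
      unfold cSv
      rw [if_neg (by omega)]
      congr 1 <;> congr 1 <;> omega
    have hB : cSv p (a+b+1) (a+b) = p - 1 := by
      unfold cSv
      rw [if_neg (by omega)]
      have h2 : a+b+1-(a+b)-1 = 0 := by omega
      have h1 : a+b+1-(a+b) = 1 := by omega
      rw [h2, h1]
      simp
    rw [hA, hB]
    have e1 : ((p^(b+1) - p^b : ℕ) : ℚ) = (p:ℚ)^b * ((p:ℚ) - 1) := by
      rw [Nat.cast_sub (Nat.pow_le_pow_right (by omega) (by omega))]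
      push_cast; ring
    have e2 : ((p - 1 : ℕ) : ℚ) = (p:ℚ) - 1 := by
      push_cast [Nat.cast_sub (by omega : 1 ≤ p)]; ring
    push_cast [e1, e2]
    have h3 : (p:ℚ)^(2*a+b) = ((p:ℚ)^a)^2 * (p:ℚ)^b := by
      rw [← pow_mul, ← pow_add]; congr 1; omega
    rw [h3]
    have hpa : (p:ℚ)^a ≠ 0 := by positivity
    have hpb : (p:ℚ)^b ≠ 0 := by positivity
    field_simp
    ring
end

section
/- Let ℓ be a prime and let C = C(c,d) be a Cartan subgroup of GL₂(ℤ_ℓ) with normalized parameters (c,d). Then C has index 2 in its normalizer N in GL₂(ℤ_ℓ), and N is the disjoint union of C and the coset g·C, where g is the matrix [[1, c], [0, −1]]. -/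
open Matrix Polynomial

lemma gMat_mul_self {p : ℕ} [Fact p.Prime] (c : ℤ_[p]) :
    (!![1, c; 0, -1] : Matrix (Fin 2) (Fin 2) ℤ_[p]) * !![1, c; 0, -1] = 1 := by
  rw [Matrix.mul_fin_two, Matrix.one_fin_two]
  norm_num

/-- The matrix `[[1, c], [0, −1]]` as an element of `GL₂(ℤ_p)` (it is an involution). -/
noncomputable def gUnit {p : ℕ} [Fact p.Prime] (c : ℤ_[p]) : GL (Fin 2) ℤ_[p] :=
  ⟨!![1, c; 0, -1], !![1, c; 0, -1], gMat_mul_self c, gMat_mul_self c⟩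

section Aux

variable {p : ℕ} [Fact p.Prime]

lemma aux_cartan_iff_comm (c d : ℤ_[p]) (A : Matrix (Fin 2) (Fin 2) ℤ_[p]) :
    (∃ x y, A = !![x, d*y; y, x+c*y]) ↔ A * !![0,d;1,c] = !![0,d;1,c] * A := by
  constructor
  · rintro ⟨x, y, rfl⟩
    ext i j
    fin_cases i <;> fin_cases j <;>
      simp [Matrix.mul_apply, Fin.sum_univ_two] <;> ring
  · intro h
    refine ⟨A 0 0, A 1 0, ?_⟩
    have h00 := congrFun (congrFun h 0) 0
    have h10 := congrFun (congrFun h 1) 0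
    simp [Matrix.mul_apply, Fin.sum_univ_two] at h00 h10
    rw [← h00, ← h10]
    exact Matrix.eta_fin_two A

/-- Conjugation of a Cartan matrix by g. -/
lemma aux_gconj (c d x y : ℤ_[p]) :
    !![1,c;0,-1] * !![x, d*y; y, x+c*y] * !![1,c;0,-1]
      = !![x+c*y, d*(-y); -y, (x+c*y)+c*(-y)] := by
  ext i j
  fin_cases i <;> fin_cases j <;>
    simp [Matrix.mul_apply, Fin.sum_univ_two] <;> ring

/-- A matrix commuting with a Cartan matrix with nonzero `y₀` is Cartan. -/
lemma aux_comm_mem (c d x₀ y₀ : ℤ_[p]) (hy₀ : y₀ ≠ 0)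
    (B : Matrix (Fin 2) (Fin 2) ℤ_[p])
    (h : B * !![x₀, d*y₀; y₀, x₀+c*y₀] = !![x₀, d*y₀; y₀, x₀+c*y₀] * B) :
    ∃ x y, B = !![x, d*y; y, x+c*y] := by
  refine ⟨B 0 0, B 1 0, ?_⟩
  have h00 := congrFun (congrFun h 0) 0
  have h10 := congrFun (congrFun h 1) 0
  simp [Matrix.mul_apply, Fin.sum_univ_two] at h00 h10
  have e1 : y₀ * (B 0 1) = y₀ * (d * B 1 0) := by linear_combination h00
  have e2 : y₀ * (B 1 1) = y₀ * (B 0 0 + c * B 1 0) := by linear_combination h10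
  have f1 := mul_left_cancel₀ hy₀ e1
  have f2 := mul_left_cancel₀ hy₀ e2
  rw [← f1, ← f2]
  exact Matrix.eta_fin_two B

lemma aux_key (c d x₀ y₀ : ℤ_[p]) (C : Subgroup (GL (Fin 2) ℤ_[p]))
    (hC : IsCartan c d C)
    (hy₀ : y₀ ≠ 0)
    (hdet : IsUnit (x₀*(x₀+c*y₀) - d*y₀*y₀))
    (huniq : ∀ x₁ y₁ : ℤ_[p], (x₁ + (x₁ + c*y₁) = x₀ + (x₀ + c*y₀)) →
        (x₁*(x₁+c*y₁) - d*y₁*y₁ = x₀*(x₀+c*y₀) - d*y₀*y₀) →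
        (x₁ = x₀ ∧ y₁ = y₀) ∨ (x₁ = x₀ + c*y₀ ∧ y₁ = -y₀))
    (A : GL (Fin 2) ℤ_[p]) (hA : A ∈ Subgroup.normalizer (C : Set (GL (Fin 2) ℤ_[p]))) :
    A ∈ C ∨ gUnit c * A ∈ C := by
  have hmem : ∀ M : GL (Fin 2) ℤ_[p], M ∈ C ↔
      ∃ x y : ℤ_[p], (M : Matrix (Fin 2) (Fin 2) ℤ_[p]) = !![x, d*y; y, x+c*y] := by
    intro M
    rw [← SetLike.mem_coe, hC]
    exact Iff.rfl
  set M₀mat : Matrix (Fin 2) (Fin 2) ℤ_[p] := !![x₀, d*y₀; y₀, x₀+c*y₀] with hM₀mat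
  have hdet' : IsUnit M₀mat.det := by
    have : M₀mat.det = x₀*(x₀+c*y₀) - d*y₀*y₀ := by
      simp [hM₀mat, Matrix.det_fin_two_of]
    rw [this]; exact hdet
  have hu : IsUnit M₀mat := (Matrix.isUnit_iff_isUnit_det _).mpr hdet'
  set M₀ : GL (Fin 2) ℤ_[p] := hu.unit with hM₀
  have hM₀v : (M₀ : Matrix (Fin 2) (Fin 2) ℤ_[p]) = M₀mat := hu.unit_spec
  have hM₀C : M₀ ∈ C := (hmem M₀).mpr ⟨x₀, y₀, hM₀v⟩
  have hM₁C : A * M₀ * A⁻¹ ∈ C := by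
    rw [Subgroup.mem_normalizer_iff] at hA
    exact (hA M₀).mp hM₀C
  obtain ⟨x₁, y₁, hM₁v⟩ := (hmem _).mp hM₁C
  have hgrp : A⁻¹ * (A * M₀) = M₀ := by group
  have hv : ((A⁻¹ : GL (Fin 2) ℤ_[p]) : Matrix (Fin 2) (Fin 2) ℤ_[p])
      * ((A : GL (Fin 2) ℤ_[p]) * (M₀ : Matrix (Fin 2) (Fin 2) ℤ_[p]))
      = (M₀ : Matrix (Fin 2) (Fin 2) ℤ_[p]) := by
    calc ((A⁻¹ : GL (Fin 2) ℤ_[p]) : Matrix (Fin 2) (Fin 2) ℤ_[p])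
        * ((A : GL (Fin 2) ℤ_[p]) * (M₀ : Matrix (Fin 2) (Fin 2) ℤ_[p]))
        = ((A⁻¹ * (A * M₀) : GL (Fin 2) ℤ_[p]) : Matrix (Fin 2) (Fin 2) ℤ_[p]) := by
          simp [Units.val_mul, mul_assoc]
      _ = (M₀ : Matrix (Fin 2) (Fin 2) ℤ_[p]) := by rw [hgrp]
  have htr : Matrix.trace ((A * M₀ * A⁻¹ : GL (Fin 2) ℤ_[p]) : Matrix (Fin 2) (Fin 2) ℤ_[p])
      = Matrix.trace (M₀ : Matrix (Fin 2) (Fin 2) ℤ_[p]) := by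
    calc Matrix.trace ((A * M₀ * A⁻¹ : GL (Fin 2) ℤ_[p]) : Matrix (Fin 2) (Fin 2) ℤ_[p])
        = Matrix.trace (((A : GL (Fin 2) ℤ_[p]) : Matrix (Fin 2) (Fin 2) ℤ_[p])
            * (M₀ : Matrix (Fin 2) (Fin 2) ℤ_[p])
            * ((A⁻¹ : GL (Fin 2) ℤ_[p]) : Matrix (Fin 2) (Fin 2) ℤ_[p])) := by
          simp [Units.val_mul]
      _ = Matrix.trace (((A⁻¹ : GL (Fin 2) ℤ_[p]) : Matrix (Fin 2) (Fin 2) ℤ_[p])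
            * (((A : GL (Fin 2) ℤ_[p]) : Matrix (Fin 2) (Fin 2) ℤ_[p])
              * (M₀ : Matrix (Fin 2) (Fin 2) ℤ_[p]))) := Matrix.trace_mul_comm _ _
      _ = Matrix.trace (M₀ : Matrix (Fin 2) (Fin 2) ℤ_[p]) := by rw [hv]
  have hdeteq : Matrix.det ((A * M₀ * A⁻¹ : GL (Fin 2) ℤ_[p]) : Matrix (Fin 2) (Fin 2) ℤ_[p])
      = Matrix.det (M₀ : Matrix (Fin 2) (Fin 2) ℤ_[p]) := by
    calc Matrix.det ((A * M₀ * A⁻¹ : GL (Fin 2) ℤ_[p]) : Matrix (Fin 2) (Fin 2) ℤ_[p])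
        = Matrix.det (((A : GL (Fin 2) ℤ_[p]) : Matrix (Fin 2) (Fin 2) ℤ_[p])
            * (M₀ : Matrix (Fin 2) (Fin 2) ℤ_[p])
            * ((A⁻¹ : GL (Fin 2) ℤ_[p]) : Matrix (Fin 2) (Fin 2) ℤ_[p])) := by
          simp [Units.val_mul]
      _ = Matrix.det (((A⁻¹ : GL (Fin 2) ℤ_[p]) : Matrix (Fin 2) (Fin 2) ℤ_[p])
            * (((A : GL (Fin 2) ℤ_[p]) : Matrix (Fin 2) (Fin 2) ℤ_[p])
              * (M₀ : Matrix (Fin 2) (Fin 2) ℤ_[p]))) := by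
          simp only [Matrix.det_mul]
          ring
      _ = Matrix.det (M₀ : Matrix (Fin 2) (Fin 2) ℤ_[p]) := by rw [hv]
  rw [hM₁v, hM₀v, hM₀mat] at htr hdeteq
  simp [Matrix.trace_fin_two_of] at htr
  simp [Matrix.det_fin_two_of] at hdeteq
  have htr' : x₁ + (x₁ + c*y₁) = x₀ + (x₀ + c*y₀) := by linear_combination htr
  have hdeteq' : x₁*(x₁+c*y₁) - d*y₁*y₁ = x₀*(x₀+c*y₀) - d*y₀*y₀ := by linear_combination hdeteq
  have hrel : (A : Matrix (Fin 2) (Fin 2) ℤ_[p]) * M₀mat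
      = !![x₁, d*y₁; y₁, x₁+c*y₁] * (A : Matrix (Fin 2) (Fin 2) ℤ_[p]) := by
    have h1 : A * M₀ = (A * M₀ * A⁻¹) * A := by group
    have h2 : ((A : GL (Fin 2) ℤ_[p]) : Matrix (Fin 2) (Fin 2) ℤ_[p])
        * ((M₀ : GL (Fin 2) ℤ_[p]) : Matrix (Fin 2) (Fin 2) ℤ_[p])
        = ((A * M₀ * A⁻¹ : GL (Fin 2) ℤ_[p]) : Matrix (Fin 2) (Fin 2) ℤ_[p])
          * ((A : GL (Fin 2) ℤ_[p]) : Matrix (Fin 2) (Fin 2) ℤ_[p]) := by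
      rw [← Units.val_mul, ← Units.val_mul, ← h1]
    rw [show ((M₀ : GL (Fin 2) ℤ_[p]) : Matrix (Fin 2) (Fin 2) ℤ_[p]) = M₀mat from hM₀v,
      hM₁v] at h2
    exact h2
  have hval : ((gUnit c : GL (Fin 2) ℤ_[p]) : Matrix (Fin 2) (Fin 2) ℤ_[p])
      = !![1,c;0,-1] := by rw [gUnit]
  rcases huniq x₁ y₁ htr' hdeteq' with ⟨hx, hy⟩ | ⟨hx, hy⟩
  · left
    have hcommv : (A : Matrix (Fin 2) (Fin 2) ℤ_[p]) * M₀mat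
        = M₀mat * (A : Matrix (Fin 2) (Fin 2) ℤ_[p]) := by
      rw [hrel, hx, hy, ← hM₀mat]
    exact (hmem A).mpr (aux_comm_mem c d x₀ y₀ hy₀ _ hcommv)
  · right
    have hswap : (!![1,c;0,-1] : Matrix (Fin 2) (Fin 2) ℤ_[p]) * !![x₁, d*y₁; y₁, x₁+c*y₁]
        = M₀mat * !![1,c;0,-1] := by
      rw [hx, hy, hM₀mat]
      ext i j
      fin_cases i <;> fin_cases j <;>
        simp [Matrix.mul_apply, Fin.sum_univ_two] <;> ring
    have hcommv : ((gUnit c * A : GL (Fin 2) ℤ_[p]) : Matrix (Fin 2) (Fin 2) ℤ_[p]) * M₀mat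
        = M₀mat * ((gUnit c * A : GL (Fin 2) ℤ_[p]) : Matrix (Fin 2) (Fin 2) ℤ_[p]) := by
      simp only [Units.val_mul, hval]
      rw [mul_assoc, hrel, ← mul_assoc, hswap, mul_assoc]
    exact (hmem _).mpr (aux_comm_mem c d x₀ y₀ hy₀ _ hcommv)

end Aux

section Main

variable {p : ℕ} [Fact p.Prime]

lemma aux_g_mem_normalizer (c d : ℤ_[p]) (C : Subgroup (GL (Fin 2) ℤ_[p]))
    (hC : IsCartan c d C) : gUnit c ∈ Subgroup.normalizer (C : Set (GL (Fin 2) ℤ_[p])) := by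
  have hmem : ∀ M : GL (Fin 2) ℤ_[p], M ∈ C ↔
      ∃ x y : ℤ_[p], (M : Matrix (Fin 2) (Fin 2) ℤ_[p]) = !![x, d * y; y, x + c * y] := by
    intro M
    rw [← SetLike.mem_coe, hC]
    exact Iff.rfl
  have hval : ((gUnit c : GL (Fin 2) ℤ_[p]) : Matrix (Fin 2) (Fin 2) ℤ_[p])
      = !![1,c;0,-1] := by rw [gUnit]
  have hg2 : gUnit c * gUnit c = (1 : GL (Fin 2) ℤ_[p]) := by
    apply Units.ext
    rw [Units.val_mul, hval, gMat_mul_self, Units.val_one]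
  have hginv : (gUnit c)⁻¹ = gUnit c := inv_eq_of_mul_eq_one_right hg2
  have step : ∀ M : GL (Fin 2) ℤ_[p], M ∈ C → gUnit c * M * (gUnit c)⁻¹ ∈ C := by
    intro M hM
    obtain ⟨x, y, hxy⟩ := (hmem M).mp hM
    refine (hmem _).mpr ⟨x + c*y, -y, ?_⟩
    rw [hginv]
    calc ((gUnit c * M * gUnit c : GL (Fin 2) ℤ_[p]) : Matrix (Fin 2) (Fin 2) ℤ_[p])
        = !![1,c;0,-1] * (M : Matrix (Fin 2) (Fin 2) ℤ_[p]) * !![1,c;0,-1] := by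
          simp [Units.val_mul, hval]
      _ = !![x + c*y, d * (-y); -y, (x + c*y) + c * (-y)] := by rw [hxy, aux_gconj]
  rw [Subgroup.mem_normalizer_iff]
  intro h
  constructor
  · exact step h
  · intro hh
    have h2 := step _ hh
    have e : gUnit c * (gUnit c * h * (gUnit c)⁻¹) * (gUnit c)⁻¹
        = (gUnit c * gUnit c) * h * (gUnit c * gUnit c)⁻¹ := by group
    rw [hg2] at e
    simp only [one_mul, inv_one, mul_one] at e
    rwa [e] at h2

end Main

/-- a Cartan subgroup has index 2 in its normalizer, which is the disjoint
union of `C` and `g·C` with `g = [[1, c], [0, −1]]`. -/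
theorem cartan_index_two_in_normalizer
    (p : ℕ) [Fact p.Prime] (c d : ℤ_[p]) (C : Subgroup (GL (Fin 2) ℤ_[p]))
    (hC : IsCartan c d C) (hcd : NormalizedParams p c d) :
    (C.subgroupOf (Subgroup.normalizer (C : Set (GL (Fin 2) ℤ_[p])))).index = 2 ∧
    (∀ M : GL (Fin 2) ℤ_[p], M ∈ Subgroup.normalizer (C : Set (GL (Fin 2) ℤ_[p])) ↔ (M ∈ C ∨ ∃ h ∈ C, M = gUnit c * h)) ∧
    (∀ h ∈ C, gUnit c * h ∉ C) := by
  have hmem : ∀ M : GL (Fin 2) ℤ_[p], M ∈ C ↔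
      ∃ x y : ℤ_[p], (M : Matrix (Fin 2) (Fin 2) ℤ_[p]) = !![x, d * y; y, x + c * y] := by
    intro M
    rw [← SetLike.mem_coe, hC]
    exact Iff.rfl
  have hval : ((gUnit c : GL (Fin 2) ℤ_[p]) : Matrix (Fin 2) (Fin 2) ℤ_[p])
      = !![1,c;0,-1] := by rw [gUnit]
  have hg2 : gUnit c * gUnit c = (1 : GL (Fin 2) ℤ_[p]) := by
    apply Units.ext
    rw [Units.val_mul, hval, gMat_mul_self, Units.val_one]
  have hginv : (gUnit c)⁻¹ = gUnit c := inv_eq_of_mul_eq_one_right hg2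
  have hgN : gUnit c ∈ Subgroup.normalizer (C : Set (GL (Fin 2) ℤ_[p])) := aux_g_mem_normalizer c d C hC
  have two_ne : (2 : ℤ_[p]) ≠ 0 := two_ne_zero
  have key : ∀ A : GL (Fin 2) ℤ_[p], A ∈ Subgroup.normalizer (C : Set (GL (Fin 2) ℤ_[p])) → A ∈ C ∨ gUnit c * A ∈ C := by
    intro A hA
    rcases hcd with ⟨hc0, hd0⟩ | ⟨hp2, hc1, hd⟩
    · subst hc0
      by_cases hdu : IsUnit d
      · refine aux_key 0 d 0 1 C hC one_ne_zero ?_ ?_ A hA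
        · have e : (0*(0+0*1) - d*1*1 : ℤ_[p]) = -d := by ring
          rw [e]; exact hdu.neg
        · intro x₁ y₁ h1 h2
          have hx : x₁ = 0 := by
            have := mul_left_cancel₀ two_ne (show (2:ℤ_[p])*x₁ = 2*0 by linear_combination h1)
            simpa using this
          have h3 : d * ((y₁ - 1)*(y₁ + 1)) = 0 := by
            linear_combination (-(1:ℤ_[p]))*h2 + (x₁ + 0)*hx
          rcases mul_eq_zero.mp h3 with h4 | h4
          · exact absurd h4 hd0
          rcases mul_eq_zero.mp h4 with h5 | h5
          · exact Or.inl ⟨by linear_combination hx, by linear_combination h5⟩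
          · exact Or.inr ⟨by linear_combination hx, by linear_combination h5⟩
      · refine aux_key 0 d 1 1 C hC one_ne_zero ?_ ?_ A hA
        · have e : (1*(1+0*1) - d*1*1 : ℤ_[p]) = 1 - d := by ring
          rw [e]
          exact IsLocalRing.isUnit_one_sub_self_of_mem_nonunits d (mem_nonunits_iff.mpr hdu)
        · intro x₁ y₁ h1 h2
          have hx : x₁ = 1 := by
            have := mul_left_cancel₀ two_ne (show (2:ℤ_[p])*x₁ = 2*1 by linear_combination h1)
            simpa using this
          have h3 : d * ((y₁ - 1)*(y₁ + 1)) = 0 := by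
            linear_combination (-(1:ℤ_[p]))*h2 + (x₁ + 1)*hx
          rcases mul_eq_zero.mp h3 with h4 | h4
          · exact absurd h4 hd0
          rcases mul_eq_zero.mp h4 with h5 | h5
          · exact Or.inl ⟨by linear_combination hx, by linear_combination h5⟩
          · exact Or.inr ⟨by linear_combination hx, by linear_combination h5⟩
    · subst hp2
      subst hc1
      have not_unit_two : ¬ IsUnit (2 : ℤ_[2]) := by
        have h := PadicInt.p_nonunit (p := 2)
        simpa [mem_nonunits_iff] using h
      rcases hd with hd0 | hdu
      · subst hd0
        refine aux_key 1 0 1 2 C hC two_ne ?_ ?_ A hA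
        · have e : (1*(1+1*2) - 0*2*2 : ℤ_[2]) = 1 - (-2) := by ring
          rw [e]
          refine IsLocalRing.isUnit_one_sub_self_of_mem_nonunits _ (mem_nonunits_iff.mpr ?_)
          simpa using not_unit_two
        · intro x₁ y₁ h1 h2
          have hy : y₁ = 4 - 2*x₁ := by linear_combination h1
          subst hy
          have hfac : (x₁ - 1)*(x₁ - 3) = 0 := by linear_combination (-(1:ℤ_[2]))*h2
          rcases mul_eq_zero.mp hfac with h5 | h5
          · exact Or.inl ⟨by linear_combination h5, by linear_combination (-(2:ℤ_[2]))*h5⟩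
          · exact Or.inr ⟨by linear_combination h5, by linear_combination (-(2:ℤ_[2]))*h5⟩
      · refine aux_key 1 d 0 1 C hC one_ne_zero ?_ ?_ A hA
        · have e : (0*(0+1*1) - d*1*1 : ℤ_[2]) = -d := by ring
          rw [e]; exact hdu.neg
        · intro x₁ y₁ h1 h2
          have hy : y₁ = 1 - 2*x₁ := by linear_combination h1
          subst hy
          have hfac : (1 + 4*d) * (x₁*(x₁ - 1)) = 0 := by
            linear_combination (-(1:ℤ_[2]))*h2
          have hnu : ¬ IsUnit (-(4*d) : ℤ_[2]) := by
            intro h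
            apply not_unit_two
            exact isUnit_of_mul_isUnit_left
              (show IsUnit ((2:ℤ_[2]) * (-(2*d))) by
                rw [show (2:ℤ_[2]) * (-(2*d)) = -(4*d) by ring]; exact h)
          have hu14 : IsUnit (1 + 4*d : ℤ_[2]) := by
            have h := IsLocalRing.isUnit_one_sub_self_of_mem_nonunits _
              (mem_nonunits_iff.mpr hnu)
            rwa [show (1 - -(4*d) : ℤ_[2]) = 1 + 4*d by ring] at h
          have hfac2 : x₁*(x₁ - 1) = 0 := by
            rcases mul_eq_zero.mp hfac with h5 | h5
            · exact absurd h5 hu14.ne_zero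
            · exact h5
          rcases mul_eq_zero.mp hfac2 with h5 | h5
          · exact Or.inl ⟨h5, by linear_combination (-(2:ℤ_[2]))*h5⟩
          · exact Or.inr ⟨by linear_combination h5, by linear_combination (-(2:ℤ_[2]))*h5⟩
  have hclass : ∀ M : GL (Fin 2) ℤ_[p],
      M ∈ Subgroup.normalizer (C : Set (GL (Fin 2) ℤ_[p])) ↔ (M ∈ C ∨ ∃ h ∈ C, M = gUnit c * h) := by
    intro M
    constructor
    · intro hM
      rcases key M hM with h | h
      · exact Or.inl h
      · exact Or.inr ⟨gUnit c * M, h, by rw [← mul_assoc, hg2, one_mul]⟩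
    · rintro (h | ⟨h, hh, rfl⟩)
      · exact Subgroup.le_normalizer h
      · exact mul_mem hgN (Subgroup.le_normalizer hh)
  have hgnotC : gUnit c ∉ C := by
    intro hgC
    obtain ⟨x, y, hxy⟩ := (hmem _).mp hgC
    rw [hval] at hxy
    have e00 := congrFun (congrFun hxy 0) 0
    have e10 := congrFun (congrFun hxy 1) 0
    have e11 := congrFun (congrFun hxy 1) 1
    simp at e00 e10 e11
    exact two_ne (by linear_combination e00 + c*e10 - e11)
  have hdisj : ∀ h ∈ C, gUnit c * h ∉ C := by
    intro h hh hcon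
    apply hgnotC
    have h2 := mul_mem hcon (inv_mem hh)
    simpa [mul_assoc] using h2
  refine ⟨?_, hclass, hdisj⟩
  rw [Subgroup.index_eq_two_iff]
  refine ⟨⟨gUnit c, hgN⟩, ?_⟩
  rintro ⟨M, hM⟩
  by_cases hMC : M ∈ C
  · refine Or.inr ⟨?_, ?_⟩
    · rwa [Subgroup.mem_subgroupOf]
    · rw [Subgroup.mem_subgroupOf]
      intro hcon
      apply hgnotC
      have h2 := mul_mem (inv_mem hMC) hcon
      simpa [← mul_assoc] using h2
  · refine Or.inl ⟨?_, ?_⟩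
    · rw [Subgroup.mem_subgroupOf]
      rcases (hclass M).mp hM with h | ⟨h, hh, rfl⟩
      · exact absurd h hMC
      · show gUnit c * h * gUnit c ∈ C
        have := (Subgroup.mem_normalizer_iff.mp hgN h).mp hh
        rwa [hginv] at this
    · rwa [Subgroup.mem_subgroupOf]
end

section
/- Let ℓ be a prime, let C = C(c,d) be a Cartan subgroup of GL₂(ℤ_ℓ) with normalized parameters (c,d), and let N be its normalizer in GL₂(ℤ_ℓ). Then N ∖ C is exactly the set of matrices of the form [[z, −dw + cz], [w, −z]] with z, w ∈ ℤ_ℓ and v_ℓ(−z² + dw² − czw) = 0. Moreover, every M ∈ N ∖ C satisfies: M ≢ I (mod ℓ) if ℓ is odd; M ≢ I (mod 4) if ℓ = 2; and M ≢ I (mod 2) if ℓ = 2 and c = 1. -/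
open Matrix Polynomial

section AuxNSC

variable {p : ℕ} [Fact p.Prime]

private lemma nsc_p_ne_zero : (p : ℤ_[p]) ≠ 0 := PadicInt.prime_p.ne_zero

private lemma nsc_nat_dvd (k m : ℕ) (h : ((p : ℤ_[p]) ^ k ∣ (m : ℤ_[p]))) : p ^ k ∣ m := by
  obtain ⟨t, ht⟩ := h
  have h2 : ((m : ℕ) : ZMod (p ^ k)) = 0 := by
    have h3 := congrArg (PadicInt.toZModPow k) ht
    rw [_root_.map_mul, map_pow, map_natCast, map_natCast] at h3
    rw [h3, ← Nat.cast_pow, ZMod.natCast_self, zero_mul]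
  exact (ZMod.natCast_eq_zero_iff _ _).mp h2

private lemma nsc_isUnit_one_add_p_mul (t : ℤ_[p]) : IsUnit (1 + (p : ℤ_[p]) * t) := by
  by_contra h
  have hm : (1 + (p : ℤ_[p]) * t) ∈ IsLocalRing.maximalIdeal ℤ_[p] :=
    (IsLocalRing.mem_maximalIdeal _).mpr h
  rw [PadicInt.maximalIdeal_eq_span_p, Ideal.mem_span_singleton] at hm
  obtain ⟨k, hk⟩ := hm
  have : ((p : ℤ_[p]) ^ 1 ∣ ((1 : ℕ) : ℤ_[p])) := by
    refine ⟨k - t, ?_⟩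
    push_cast
    rw [pow_one]
    linear_combination hk
  have := nsc_nat_dvd 1 1 this
  simp at this
  exact (Fact.out : p.Prime).one_lt.ne' this

private lemma nsc_one_add_four_ne (d : ℤ_[2]) : (1 : ℤ_[2]) + 4 * d ≠ 0 := by
  intro h
  have : ((2 : ℤ_[2]) ^ 1 ∣ ((1 : ℕ) : ℤ_[2])) := by
    refine ⟨-(2 * d), ?_⟩
    push_cast
    rw [pow_one]
    linear_combination h
  have := nsc_nat_dvd (p := 2) 1 1 this
  norm_num at this

end AuxNSC

section AuxMat

variable {R : Type*} [CommRing R]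

/-- If `A` anticommutes with `φ` (in the sense `Aφ = (c - φ)A`), then conjugation by `A`
maps the Cartan shape to the Cartan shape. -/
private lemma nsc_key_swap (c d x y : R) (Mv : Matrix (Fin 2) (Fin 2) R)
    (hA : Mv * !![0, d; 1, c] = !![c, -d; -1, 0] * Mv) :
    Mv * !![x, d * y; y, x + c * y] = !![x + c * y, d * -y; -y, (x + c * y) + c * -y] * Mv := by
  rw [Matrix.eta_fin_two Mv] at hA ⊢
  set a := Mv 0 0; set b := Mv 0 1; set e := Mv 1 0; set f := Mv 1 1
  rw [Matrix.mul_fin_two, Matrix.mul_fin_two] at hA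
  rw [← Matrix.ext_iff] at hA
  have h1 := hA 0 0; have h2 := hA 0 1; have h3 := hA 1 0; have h4 := hA 1 1
  simp at h1 h2 h3 h4
  rw [Matrix.mul_fin_two, Matrix.mul_fin_two]
  rw [← Matrix.ext_iff]
  intro i j
  fin_cases i <;> fin_cases j <;> simp
  · linear_combination y * h1
  · linear_combination y * h2
  · linear_combination y * h3
  · linear_combination y * h4

private lemma nsc_conj_mem (c d x y : R) (Mv W : Matrix (Fin 2) (Fin 2) R)
    (hA : Mv * !![0, d; 1, c] = !![c, -d; -1, 0] * Mv) (hMW : Mv * W = 1) :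
    ∃ x' y', Mv * !![x, d * y; y, x + c * y] * W = !![x', d * y'; y', x' + c * y'] := by
  refine ⟨x + c * y, -y, ?_⟩
  rw [nsc_key_swap c d x y Mv hA, mul_assoc, hMW, mul_one]

private lemma nsc_scalar_comm (c : R) (A : Matrix (Fin 2) (Fin 2) R) :
    !![c, 0; 0, c] * A = A * !![c, 0; 0, c] := by
  have h : (!![c, 0; 0, c] : Matrix (Fin 2) (Fin 2) R) = c • 1 := by
    ext i j
    fin_cases i <;> fin_cases j <;> simp [Matrix.one_apply]
  rw [h, smul_mul_assoc, one_mul, mul_smul_comm, mul_one]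

private lemma nsc_inv_anti (c d : R) (Mv W : Matrix (Fin 2) (Fin 2) R)
    (hA : Mv * !![0, d; 1, c] = !![c, -d; -1, 0] * Mv)
    (hMW : Mv * W = 1) (hWM : W * Mv = 1) :
    W * !![0, d; 1, c] = !![c, -d; -1, 0] * W := by
  have hsum : (!![c, -d; -1, 0] : Matrix (Fin 2) (Fin 2) R) + !![0, d; 1, c] = !![c, 0; 0, c] := by
    ext i j
    fin_cases i <;> fin_cases j <;> simp
  have hphiM : !![0, d; 1, c] * Mv = !![c, 0; 0, c] * Mv - Mv * !![0, d; 1, c] := by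
    rw [hA, ← sub_mul, ← hsum, add_sub_cancel_left]
  calc W * !![0, d; 1, c]
      = W * !![0, d; 1, c] * (Mv * W) := by rw [hMW, mul_one]
    _ = W * (!![0, d; 1, c] * Mv) * W := by noncomm_ring
    _ = W * (!![c, 0; 0, c] * Mv - Mv * !![0, d; 1, c]) * W := by rw [hphiM]
    _ = W * !![c, 0; 0, c] * (Mv * W) - (W * Mv) * (!![0, d; 1, c] * W) := by noncomm_ring
    _ = !![c, 0; 0, c] * W - !![0, d; 1, c] * W := by
        rw [hMW, hWM, mul_one, one_mul, ← nsc_scalar_comm]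
    _ = !![c, -d; -1, 0] * W := by rw [← sub_mul, ← hsum, add_sub_cancel_right]

end AuxMat

set_option maxHeartbeats 1000000 in
/-- description of `N ∖ C` and non-congruence properties of its elements. -/
theorem normalizer_sdiff_cartan_description
    (p : ℕ) [Fact p.Prime] (c d : ℤ_[p]) (C : Subgroup (GL (Fin 2) ℤ_[p]))
    (hC : IsCartan c d C) (hcd : NormalizedParams p c d) :
    (∀ M : GL (Fin 2) ℤ_[p],
      (M ∈ Subgroup.normalizer (C : Set (GL (Fin 2) ℤ_[p])) ∧ M ∉ C) ↔
        ∃ z w : ℤ_[p],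
          (M : Matrix (Fin 2) (Fin 2) ℤ_[p]) = !![z, -d * w + c * z; w, -z] ∧
          IsUnit (-z ^ 2 + d * w ^ 2 - c * z * w)) ∧
    (∀ M : GL (Fin 2) ℤ_[p], M ∈ Subgroup.normalizer (C : Set (GL (Fin 2) ℤ_[p])) → M ∉ C →
      (Odd p → ¬ modI 1 M) ∧
      (p = 2 → ¬ ∀ i j, (4 : ℤ_[p]) ∣ ((M : Matrix (Fin 2) (Fin 2) ℤ_[p]) - 1) i j) ∧
      (p = 2 → c = 1 → ¬ ∀ i j, (2 : ℤ_[p]) ∣ ((M : Matrix (Fin 2) (Fin 2) ℤ_[p]) - 1) i j)) := by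
  have hp0 : (p : ℤ_[p]) ≠ 0 := nsc_p_ne_zero
  have hmem : ∀ A : GL (Fin 2) ℤ_[p],
      A ∈ C ↔ ∃ x y : ℤ_[p], (A : Matrix (Fin 2) (Fin 2) ℤ_[p]) = !![x, d * y; y, x + c * y] := by
    intro A
    rw [← SetLike.mem_coe, hC]
    exact Iff.rfl
  have part1 : ∀ M : GL (Fin 2) ℤ_[p],
      (M ∈ Subgroup.normalizer (C : Set (GL (Fin 2) ℤ_[p])) ∧ M ∉ C) ↔
        ∃ z w : ℤ_[p],
          (M : Matrix (Fin 2) (Fin 2) ℤ_[p]) = !![z, -d * w + c * z; w, -z] ∧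
          IsUnit (-z ^ 2 + d * w ^ 2 - c * z * w) := by
    intro M
    set Mv : Matrix (Fin 2) (Fin 2) ℤ_[p] := (M : Matrix (Fin 2) (Fin 2) ℤ_[p]) with hMv_def
    set W : Matrix (Fin 2) (Fin 2) ℤ_[p] := ((M⁻¹ : GL (Fin 2) ℤ_[p]) : Matrix (Fin 2) (Fin 2) ℤ_[p]) with hW_def
    have hMW : Mv * W = 1 := by
      rw [hMv_def, hW_def, ← Units.val_mul, mul_inv_cancel, Units.val_one]
    have hWM : W * Mv = 1 := by
      rw [hMv_def, hW_def, ← Units.val_mul, inv_mul_cancel, Units.val_one]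
    have hdet1 : Mv.det * W.det = 1 := by
      rw [← Matrix.det_mul, hMW, Matrix.det_one]
    constructor
    · rintro ⟨hN, hMC⟩
      -- the auxiliary element g = I + pφ of C
      set gmat : Matrix (Fin 2) (Fin 2) ℤ_[p] := !![1, d * p; p, 1 + c * p] with hgmat_def
      have hgdet : IsUnit gmat.det := by
        have : gmat.det = 1 + (p : ℤ_[p]) * (c - d * p) := by
          rw [hgmat_def, Matrix.det_fin_two_of]; ring
        rw [this]
        exact nsc_isUnit_one_add_p_mul _
      obtain ⟨g, hgval⟩ : ∃ g : GL (Fin 2) ℤ_[p],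
          (g : Matrix (Fin 2) (Fin 2) ℤ_[p]) = gmat :=
        ⟨Matrix.nonsingInvUnit gmat hgdet, rfl⟩
      have hgC : g ∈ C := (hmem g).mpr ⟨1, p, by rw [hgval, hgmat_def]⟩
      have hconjC : M * g * M⁻¹ ∈ C := (Subgroup.mem_normalizer_iff.mp hN g).mp hgC
      obtain ⟨x, y, hconj⟩ := (hmem _).mp hconjC
      have hconj' : Mv * gmat * W = !![x, d * y; y, x + c * y] := by
        rw [← hgval, hMv_def, hW_def, ← Units.val_mul, ← Units.val_mul]
        exact hconj
      -- trace and determinant equations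
      have hE1 : (1 : ℤ_[p]) + (1 + c * p) = x + (x + c * y) := by
        have h := congrArg Matrix.trace hconj'
        rwa [Matrix.trace_mul_comm (Mv * gmat) W, ← mul_assoc, hWM, one_mul, hgmat_def,
          Matrix.trace_fin_two_of, Matrix.trace_fin_two_of] at h
      have hE2 : (1 : ℤ_[p]) * (1 + c * p) - d * p * p = x * (x + c * y) - d * y * y := by
        have h := congrArg Matrix.det hconj'
        rw [Matrix.det_mul, Matrix.det_mul, hgmat_def, Matrix.det_fin_two_of,
          Matrix.det_fin_two_of] at h
        linear_combination h - ((1 : ℤ_[p]) * (1 + c * p) - d * p * p) * hdet1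
      -- solve: (x,y) = (1,p) or (1+cp, -p)
      have hxy : (x = 1 ∧ y = (p : ℤ_[p])) ∨ (x = 1 + c * p ∧ y = -(p : ℤ_[p])) := by
        rcases hcd with ⟨hc0, hd0⟩ | ⟨hp2, hc1, _⟩
        · subst hc0
          have h2ne : (2 : ℤ_[p]) ≠ 0 := by
            have : ((2 : ℕ) : ℤ_[p]) ≠ 0 := Nat.cast_ne_zero.mpr (by norm_num)
            exact_mod_cast this
          have hx : x = 1 := by
            have h2x : (2 : ℤ_[p]) * x = 2 * 1 := by linear_combination -hE1
            exact mul_left_cancel₀ h2ne h2x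
          subst hx
          have hyy : d * ((y - p) * (y + p)) = 0 := by linear_combination hE2
          rcases mul_eq_zero.mp hyy with h | h
          · exact absurd h hd0
          rcases mul_eq_zero.mp h with h | h
          · exact Or.inl ⟨rfl, by linear_combination h⟩
          · exact Or.inr ⟨by ring, by linear_combination h⟩
        · subst hp2; subst hc1
          have hkey : (x - 1) * (x - 3) * (1 + 4 * d) = 0 := by
            push_cast at hE1 hE2 ⊢
            linear_combination hE2 + (-x - 2 * d * x + 4 * d + d * y) * hE1
          rcases mul_eq_zero.mp hkey with h | h
          · rcases mul_eq_zero.mp h with h | h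
            · have hx : x = 1 := by linear_combination h
              subst hx
              refine Or.inl ⟨rfl, ?_⟩
              push_cast at hE1 ⊢
              linear_combination -hE1
            · have hx : x = 3 := by linear_combination h
              subst hx
              refine Or.inr ⟨by push_cast; ring, ?_⟩
              push_cast at hE1 ⊢
              linear_combination -hE1
          · exact absurd h (nsc_one_add_four_ne d)
      -- turn the conjugation identity into a relation  Mv * gmat = T * Mv
      have hMg : Mv * gmat = !![x, d * y; y, x + c * y] * Mv := by
        have h := congrArg (· * Mv) hconj'
        simpa only [mul_assoc, hWM, mul_one] using h
      rcases hxy with ⟨hx, hy⟩ | ⟨hx, hy⟩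
      · -- commutation case: contradiction with M ∉ C
        subst hx; subst hy
        exfalso
        apply hMC
        obtain ⟨a, b, e, f, hMv⟩ : ∃ a b e f, Mv = !![a, b; e, f] :=
          ⟨_, _, _, _, Matrix.eta_fin_two Mv⟩
        refine (hmem M).mpr ⟨a, e, ?_⟩
        rw [← hMv_def]
        rw [hMv, hgmat_def, Matrix.mul_fin_two, Matrix.mul_fin_two, ← Matrix.ext_iff] at hMg
        have h00 := hMg 0 0; have h10 := hMg 1 0
        simp at h00 h10
        have hb : b = d * e := by
          apply mul_left_cancel₀ hp0
          linear_combination h00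
        have hf : f = a + c * e := by
          apply mul_left_cancel₀ hp0
          linear_combination h10
        rw [hMv, hb, hf]
      · -- anticommutation case: extract the shape of M
        subst hx; subst hy
        obtain ⟨a, b, e, f, hMv⟩ : ∃ a b e f, Mv = !![a, b; e, f] :=
          ⟨_, _, _, _, Matrix.eta_fin_two Mv⟩
        rw [hMv, hgmat_def, Matrix.mul_fin_two, Matrix.mul_fin_two, ← Matrix.ext_iff] at hMg
        have h00 := hMg 0 0; have h10 := hMg 1 0
        simp at h00 h10
        have hb : b = -d * e + c * a := by
          apply mul_left_cancel₀ hp0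
          linear_combination h00
        have hf : f = -a := by
          apply mul_left_cancel₀ hp0
          linear_combination h10
        refine ⟨a, e, ?_, ?_⟩
        · rw [hMv, hb, hf]
        · have hdet : Mv.det = -a ^ 2 + d * e ^ 2 - c * a * e := by
            rw [hMv, Matrix.det_fin_two_of]
            linear_combination a * hf - e * hb
          rw [← hdet]
          exact IsUnit.of_mul_eq_one _ hdet1
    · rintro ⟨z, w, hM, hu⟩
      have hA : Mv * !![0, d; 1, c] = !![c, -d; -1, 0] * Mv := by
        rw [hM, Matrix.mul_fin_two, Matrix.mul_fin_two, ← Matrix.ext_iff]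
        intro i j
        fin_cases i <;> fin_cases j <;> simp <;> ring
      have hA' : W * !![0, d; 1, c] = !![c, -d; -1, 0] * W := nsc_inv_anti c d Mv W hA hMW hWM
      constructor
      · rw [Subgroup.mem_normalizer_iff]
        intro h
        rw [hmem h, hmem (M * h * M⁻¹)]
        have hcoe : ((M * h * M⁻¹ : GL (Fin 2) ℤ_[p]) : Matrix (Fin 2) (Fin 2) ℤ_[p]) =
            Mv * (h : Matrix (Fin 2) (Fin 2) ℤ_[p]) * W := by
          rw [hMv_def, hW_def, ← Units.val_mul, ← Units.val_mul]
        constructor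
        · rintro ⟨x, y, hh⟩
          obtain ⟨x', y', hc'⟩ := nsc_conj_mem c d x y Mv W hA hMW
          exact ⟨x', y', by rw [hcoe, hh, hc']⟩
        · rintro ⟨x, y, hh⟩
          obtain ⟨x', y', hc'⟩ := nsc_conj_mem c d x y W Mv hA' hWM
          refine ⟨x', y', ?_⟩
          have hval : (h : Matrix (Fin 2) (Fin 2) ℤ_[p]) =
              W * (Mv * (h : Matrix (Fin 2) (Fin 2) ℤ_[p]) * W) * Mv := by
            simp only [mul_assoc, hWM, mul_one]
            rw [← mul_assoc, hWM, one_mul]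
          rw [hval, ← hcoe, hh, hc']
      · intro hMC
        obtain ⟨x, y, hx⟩ := (hmem M).mp hMC
        have hM' : (!![x, d * y; y, x + c * y] : Matrix (Fin 2) (Fin 2) ℤ_[p]) =
            !![z, -d * w + c * z; w, -z] := hx.symm.trans hM
        rw [← Matrix.ext_iff] at hM'
        have e00 := hM' 0 0; have e01 := hM' 0 1; have e10 := hM' 1 0; have e11 := hM' 1 1
        simp at e00 e01 e10 e11
        -- e00 : x = z, e01 : d*y = -d*w + c*z, e10 : y = w, e11 : x + c*y = -z
        have hz0 : z = 0 ∧ w = 0 := by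
          rcases hcd with ⟨hc0, hd0⟩ | ⟨hp2, hc1, _⟩
          · subst hc0
            have h2ne : (2 : ℤ_[p]) ≠ 0 := by
              have : ((2 : ℕ) : ℤ_[p]) ≠ 0 := Nat.cast_ne_zero.mpr (by norm_num)
              exact_mod_cast this
            have hz : z = 0 := by
              apply mul_left_cancel₀ h2ne
              rw [mul_zero]
              linear_combination -e00 + e11
            have hw : w = 0 := by
              rcases mul_eq_zero.mp (show d * (2 * w) = 0 by
                linear_combination e01 - d * e10) with h | h
              · exact absurd h hd0
              · exact mul_left_cancel₀ h2ne (by rw [mul_zero]; linear_combination h)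
            exact ⟨hz, hw⟩
          · subst hp2; subst hc1
            have hz : z = 0 := by
              rcases mul_eq_zero.mp (show z * (1 + 4 * d) = 0 by
                linear_combination -2 * d * e00 - e01 - d * e10 + 2 * d * e11) with h | h
              · exact h
              · exact absurd h (nsc_one_add_four_ne d)
            refine ⟨hz, ?_⟩
            have h2ne : (2 : ℤ_[2]) ≠ 0 := by
              have : ((2 : ℕ) : ℤ_[2]) ≠ 0 := Nat.cast_ne_zero.mpr (by norm_num)
              exact_mod_cast this
            apply mul_left_cancel₀ h2ne
            rw [mul_zero]
            linear_combination -2 * e00 - 2 * e10 + 2 * e11 - 4 * hz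
        obtain ⟨hz, hw⟩ := hz0
        rw [hz, hw] at hu
        simp at hu
  refine ⟨part1, ?_⟩
  intro M hN hMC
  obtain ⟨z, w, hM, hu⟩ := (part1 M).mp ⟨hN, hMC⟩
  refine ⟨?_, ?_, ?_⟩
  · intro hodd hmod
    have h00 := hmod 0 0
    have h11 := hmod 1 1
    rw [hM] at h00 h11
    simp [Matrix.sub_apply, Matrix.one_apply] at h00 h11
    have hdvd2 : (p : ℤ_[p]) ^ 1 ∣ ((2 : ℕ) : ℤ_[p]) := by
      rw [pow_one]
      push_cast
      have hsum := dvd_add h00 h11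
      have h2 : (p : ℤ_[p]) ∣ -2 := by
        convert hsum using 1
        ring
      exact (dvd_neg.mp h2)
    have hnat := nsc_nat_dvd 1 2 hdvd2
    rw [pow_one] at hnat
    have hp2 : p = 2 := ((Nat.prime_dvd_prime_iff_eq Fact.out Nat.prime_two).mp hnat)
    rw [hp2] at hodd
    rcases hodd with ⟨k, hk⟩
    omega
  · intro hp2 hmod
    subst hp2
    have h00 := hmod 0 0
    have h11 := hmod 1 1
    rw [hM] at h00 h11
    simp [Matrix.sub_apply, Matrix.one_apply] at h00 h11
    have hdvd2 : (2 : ℤ_[2]) ^ 2 ∣ ((2 : ℕ) : ℤ_[2]) := by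
      have h4 : (4 : ℤ_[2]) = (2 : ℤ_[2]) ^ 2 := by norm_num
      rw [← h4]
      push_cast
      have hsum := dvd_add h00 h11
      have h2 : (4 : ℤ_[2]) ∣ -2 := by
        convert hsum using 1
        ring
      exact (dvd_neg.mp h2)
    have hnat := nsc_nat_dvd (p := 2) 2 2 hdvd2
    norm_num at hnat
  · intro hp2 hc1 hmod
    subst hp2; subst hc1
    have h00 := hmod 0 0
    have h01 := hmod 0 1
    have h10 := hmod 1 0
    rw [hM] at h00 h01 h10
    simp [Matrix.sub_apply, Matrix.one_apply] at h00 h01 h10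
    have hdvd1 : (2 : ℤ_[2]) ^ 1 ∣ ((1 : ℕ) : ℤ_[2]) := by
      rw [pow_one]
      push_cast
      have hz : (2 : ℤ_[2]) ∣ z := by
        have hcomb := dvd_add h01 (Dvd.dvd.mul_left h10 d)
        convert hcomb using 1
        ring
      have hfin := dvd_sub hz h00
      convert hfin using 1
      ring
    have hnat := nsc_nat_dvd (p := 2) 1 1 hdvd1
    norm_num at hnat
end
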